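/- arXiv:2102.11576 — 2 statements merged into one kernel-verified Lean document; each statement's English description precedes it below -/
import Mathlib

section
/- Let α_1, α_2 ∈ (1,2), let n_1, n_2 ≥ 1 be integers, let c_x, c_y > 0, and set A = c_x (I_{n_2} ⊗ G_{n_1}^{(α_1)}) + c_y (G_{n_2}^{(α_2)} ⊗ I_{n_1}) and τ_1(A) = c_x (I_{n_2} ⊗ τ(G_{n_1}^{(α_1)})) + c_y (τ(G_{n_2}^{(α_2)}) ⊗ I_{n_1}). Then τ_1(A) is invertible and every eigenvalue λ of τ_1(A)^{-1} A is real and satisfies 1/2 < λ < 3/2; equivalently, 1/2 < (x^T A x)/(x^T τ_1(A) x) < 3/2 for every nonzero x ∈ ℝ^{n_1 n_2}. -/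
/-- Grünwald–Letnikov coefficients: `g α 0 = 1`,
`g α l = (1 - (α+1)/l) * g α (l-1)` for `l ≥ 1`. -/
noncomputable def g (α : ℝ) : ℕ → ℝ
  | 0 => 1
  | l + 1 => (1 - (α + 1) / ((l : ℝ) + 1)) * g α l


/-- First column (Toeplitz symbol) of `G_n^{(α)}`: entry at distance `d` is
`2 g₁` if `d = 0`, `g₀ + g₂` if `d = 1`, and `g_{d+1}` if `d ≥ 2`. -/
noncomputable def gSymb (α : ℝ) : ℕ → ℝ
  | 0 => 2 * g α 1
  | 1 => g α 0 + g α 2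
  | d + 2 => g α (d + 3)

/-- The symmetric Toeplitz matrix `G_n^{(α)}`. -/
noncomputable def Gmat (α : ℝ) (n : ℕ) : Matrix (Fin n) (Fin n) ℝ :=
  Matrix.of fun i j => gSymb α (((i : ℤ) - (j : ℤ)).natAbs)

/-- The symmetric Toeplitz matrix `T_n = [t_{|i-j|}]` generated by `t`. -/
noncomputable def toeplitzMat (t : ℕ → ℝ) (n : ℕ) : Matrix (Fin n) (Fin n) ℝ :=
  Matrix.of fun i j => t (((i : ℤ) - (j : ℤ)).natAbs)

/-- The Hankel correction matrix `H_n` (1-based indices `i, j`):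
`[H_n]_{ij} = t_{i+j}` for `2 ≤ i+j ≤ n-1`, `0` for `n ≤ i+j ≤ n+2`,
and `t_{2n+2-(i+j)}` for `n+3 ≤ i+j ≤ 2n`. -/
noncomputable def hankelMat (t : ℕ → ℝ) (n : ℕ) : Matrix (Fin n) (Fin n) ℝ :=
  Matrix.of fun i j =>
    let s := (i : ℕ) + (j : ℕ) + 2
    if s ≤ n - 1 then t s else if s ≤ n + 2 then 0 else t (2 * n + 2 - s)

/-- The τ matrix `τ(T_n) = T_n - H_n`. -/
noncomputable def tauMat (t : ℕ → ℝ) (n : ℕ) : Matrix (Fin n) (Fin n) ℝ :=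
  toeplitzMat t n - hankelMat t n

open Matrix Kronecker

/-- `A = c_x (I_{n₂} ⊗ G_{n₁}^{(α₁)}) + c_y (G_{n₂}^{(α₂)} ⊗ I_{n₁})`. -/
noncomputable def Amat (α₁ α₂ : ℝ) (n₁ n₂ : ℕ) (cx cy : ℝ) :
    Matrix (Fin n₂ × Fin n₁) (Fin n₂ × Fin n₁) ℝ :=
  cx • ((1 : Matrix (Fin n₂) (Fin n₂) ℝ) ⊗ₖ Gmat α₁ n₁) +
    cy • (Gmat α₂ n₂ ⊗ₖ (1 : Matrix (Fin n₁) (Fin n₁) ℝ))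

/-- `τ₁(A) = c_x (I_{n₂} ⊗ τ(G_{n₁}^{(α₁)})) + c_y (τ(G_{n₂}^{(α₂)}) ⊗ I_{n₁})`. -/
noncomputable def tau1A (α₁ α₂ : ℝ) (n₁ n₂ : ℕ) (cx cy : ℝ) :
    Matrix (Fin n₂ × Fin n₁) (Fin n₂ × Fin n₁) ℝ :=
  cx • ((1 : Matrix (Fin n₂) (Fin n₂) ℝ) ⊗ₖ tauMat (gSymb α₁) n₁) +
    cy • (tauMat (gSymb α₂) n₂ ⊗ₖ (1 : Matrix (Fin n₁) (Fin n₁) ℝ))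

lemma g_zero (α : ℝ) : g α 0 = 1 := rfl

lemma g_one (α : ℝ) : g α 1 = -α := by
  show (1 - (α + 1) / ((0 : ℕ) + 1 : ℝ)) * g α 0 = -α
  rw [g_zero]; push_cast; ring

lemma g_succ (α : ℝ) (l : ℕ) : g α (l + 1) = (1 - (α + 1) / ((l : ℝ) + 1)) * g α l := rfl

lemma g_two (α : ℝ) : g α 2 = α * (α - 1) / 2 := by
  rw [show (2:ℕ) = 1 + 1 from rfl, g_succ, g_one]; push_cast; ring

lemma g_pos (α : ℝ) (h1 : 1 < α) (h2 : α < 2) : ∀ l, 2 ≤ l → 0 < g α l := by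
  intro l hl
  induction l, hl using Nat.le_induction with
  | base => rw [g_two]; nlinarith
  | succ m hm ih =>
    rw [g_succ]
    have hm' : (2 : ℝ) ≤ (m : ℝ) := by exact_mod_cast hm
    have hfac : 0 < 1 - (α + 1) / ((m : ℝ) + 1) := by
      rw [sub_pos, div_lt_one (by linarith)]; linarith
    exact mul_pos hfac ih

lemma g_anti (α : ℝ) (h1 : 1 < α) (h2 : α < 2) :
    ∀ l m, 2 ≤ l → l ≤ m → g α m ≤ g α l := by
  intro l m hl hlm
  induction m, hlm using Nat.le_induction with
  | base => exact le_refl _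
  | succ m hm ih =>
    have h2m : 2 ≤ m := le_trans hl hm
    have hm' : (2 : ℝ) ≤ (m : ℝ) := by exact_mod_cast h2m
    have hfac : 1 - (α + 1) / ((m : ℝ) + 1) ≤ 1 := by
      have : 0 ≤ (α + 1) / ((m : ℝ) + 1) := by positivity
      linarith
    have hfac0 : 0 ≤ 1 - (α + 1) / ((m : ℝ) + 1) := by
      rw [sub_nonneg, div_le_one (by linarith)]; linarith
    calc g α (m + 1) = (1 - (α + 1) / ((m : ℝ) + 1)) * g α m := g_succ α m
    _ ≤ 1 * g α m := by
        apply mul_le_mul_of_nonneg_right hfac (le_of_lt (g_pos α h1 h2 m h2m))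
    _ = g α m := one_mul _
    _ ≤ g α l := ih

lemma g_beta_neg (α : ℝ) (h1 : 1 < α) (h2 : α < 2) : ∀ L, 1 ≤ L → g (α - 1) L < 0 := by
  intro L hL
  induction L, hL using Nat.le_induction with
  | base =>
    rw [g_one]; linarith
  | succ m hm ih =>
    rw [g_succ]
    have hm' : (1 : ℝ) ≤ (m : ℝ) := by exact_mod_cast hm
    have hfac : 0 < 1 - (α - 1 + 1) / ((m : ℝ) + 1) := by
      rw [sub_pos, div_lt_one (by linarith)]; linarith
    exact mul_neg_of_pos_of_neg hfac ih

lemma g_aux (α : ℝ) : ∀ L : ℕ, g α (L + 1) = -(α / ((L : ℝ) + 1)) * g (α - 1) L := by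
  intro L
  induction L with
  | zero => rw [g_one, g_zero]; push_cast; ring
  | succ m ih =>
    rw [g_succ, ih, g_succ]
    have hm1 : ((m : ℝ) + 1) ≠ 0 := by positivity
    have hm2 : ((m : ℝ) + 1 + 1) ≠ 0 := by positivity
    push_cast
    field_simp
    ring

lemma gSymb_two_le (α : ℝ) : ∀ d, 2 ≤ d → gSymb α d = g α (d + 1) := by
  intro d hd
  obtain ⟨e, rfl⟩ : ∃ e, d = e + 2 := ⟨d - 2, by omega⟩
  rfl

lemma sum_gSymb (α : ℝ) : ∀ D, 1 ≤ D →
    ∑ d ∈ Finset.Icc 1 D, gSymb α d = α + g (α - 1) (D + 1) := by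
  intro D hD
  induction D, hD using Nat.le_induction with
  | base =>
    rw [show Finset.Icc 1 1 = {1} from rfl, Finset.sum_singleton]
    show g α 0 + g α 2 = _
    rw [g_zero, g_two, show ((1:ℕ) + 1 : ℕ) = 2 from rfl, g_two]
    ring
  | succ m hm ih =>
    rw [Finset.sum_Icc_succ_top (by omega), ih, gSymb_two_le α (m + 1) (by omega)]
    have e1 : g α (m + 1 + 1) = -(α / ((m : ℝ) + 1 + 1)) * g (α - 1) (m + 1) := by
      have := g_aux α (m + 1); push_cast at this ⊢; linarith [this]
    have e2 : g (α - 1) (m + 1 + 1) = (1 - (α - 1 + 1) / ((m : ℝ) + 1 + 1)) * g (α - 1) (m + 1) := by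
      have := g_succ (α - 1) (m + 1); push_cast at this ⊢; linarith [this]
    rw [e1, e2]
    have hm2 : ((m : ℝ) + 1 + 1) ≠ 0 := by positivity
    field_simp
    ring

lemma gSymb_nonneg (α : ℝ) (h1 : 1 < α) (h2 : α < 2) : ∀ d, 1 ≤ d → 0 ≤ gSymb α d := by
  intro d hd
  match d, hd with
  | 1, _ =>
    show 0 ≤ g α 0 + g α 2
    rw [g_zero]
    nlinarith [g_pos α h1 h2 2 le_rfl]
  | (e + 2), _ =>
    show 0 ≤ g α (e + 3)
    exact le_of_lt (g_pos α h1 h2 (e + 3) (by omega))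

lemma gSymb_le (α : ℝ) (h1 : 1 < α) (h2 : α < 2) :
    ∀ d m, 1 ≤ d → d ≤ m → 2 ≤ m → gSymb α m ≤ gSymb α d := by
  intro d m hd hdm hm
  rw [gSymb_two_le α m hm]
  match d, hd with
  | 1, _ =>
    show _ ≤ g α 0 + g α 2
    rw [g_zero]
    nlinarith [g_anti α h1 h2 2 (m + 1) le_rfl (by omega)]
  | (e + 2), _ =>
    rw [gSymb_two_le α (e + 2) (by omega)]
    exact g_anti α h1 h2 (e + 3) (m + 1) (by omega) (by omega)

lemma sum_gSymb_lt (α : ℝ) (h1 : 1 < α) (h2 : α < 2) (n : ℕ) (hn : 1 ≤ n) :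
    ∑ d ∈ Finset.Icc 1 n, gSymb α d < α := by
  rw [sum_gSymb α n hn]
  have := g_beta_neg α h1 h2 (n + 1) (by omega)
  linarith

section entries
variable (α : ℝ) (h1 : 1 < α) (h2 : α < 2) (n : ℕ)

lemma toeplitz_apply (i j : Fin n) :
    toeplitzMat (gSymb α) n i j = gSymb α (((i : ℕ) : ℤ) - ((j : ℕ) : ℤ)).natAbs := rfl

lemma hankel_apply (i j : Fin n) :
    hankelMat (gSymb α) n i j =
      if (i : ℕ) + (j : ℕ) + 2 ≤ n - 1 then gSymb α ((i : ℕ) + (j : ℕ) + 2)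
      else if (i : ℕ) + (j : ℕ) + 2 ≤ n + 2 then 0
      else gSymb α (2 * n + 2 - ((i : ℕ) + (j : ℕ) + 2)) := rfl

include h1 h2

lemma toeplitz_symm (i j : Fin n) :
    toeplitzMat (gSymb α) n i j = toeplitzMat (gSymb α) n j i := by
  rw [toeplitz_apply, toeplitz_apply]
  congr 1
  omega

lemma hankel_symm (i j : Fin n) :
    hankelMat (gSymb α) n i j = hankelMat (gSymb α) n j i := by
  rw [hankel_apply, hankel_apply, Nat.add_comm (i : ℕ) (j : ℕ)]

lemma toeplitz_offdiag_nonneg (i j : Fin n) (hij : i ≠ j) :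
    0 ≤ toeplitzMat (gSymb α) n i j := by
  rw [toeplitz_apply]
  apply gSymb_nonneg α h1 h2
  have : (i : ℕ) ≠ (j : ℕ) := fun h => hij (Fin.ext h)
  omega

lemma hankel_nonneg (i j : Fin n) : 0 ≤ hankelMat (gSymb α) n i j := by
  rw [hankel_apply]
  have hi := i.isLt; have hj := j.isLt
  split_ifs with hA hB
  · exact gSymb_nonneg α h1 h2 _ (by omega)
  · exact le_refl 0
  · exact gSymb_nonneg α h1 h2 _ (by omega)

lemma hankel_le (i j : Fin n) (hij : i ≠ j) :
    hankelMat (gSymb α) n i j ≤ toeplitzMat (gSymb α) n i j := by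
  rw [hankel_apply, toeplitz_apply]
  have hi := i.isLt; have hj := j.isLt
  have hne : (i : ℕ) ≠ (j : ℕ) := fun h => hij (Fin.ext h)
  have hd1 : 1 ≤ (((i : ℕ) : ℤ) - ((j : ℕ) : ℤ)).natAbs := by omega
  have hd2 : (((i : ℕ) : ℤ) - ((j : ℕ) : ℤ)).natAbs ≤ (i : ℕ) + (j : ℕ) := by omega
  split_ifs with hA hB
  · exact gSymb_le α h1 h2 _ _ hd1 (by omega) (by omega)
  · exact gSymb_nonneg α h1 h2 _ hd1
  · exact gSymb_le α h1 h2 _ _ hd1 (by omega) (by omega)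

end entries

open Finset in
lemma row_pos (α : ℝ) (h1 : 1 < α) (h2 : α < 2) (n : ℕ) (hn : 1 ≤ n) (i : Fin n) :
    0 < ∑ j : Fin n, (-(toeplitzMat (gSymb α) n i j) - hankelMat (gSymb α) n i j) := by
  have hk : (i : ℕ) < n := i.isLt
  set k := (i : ℕ) with hkdef
  -- Toeplitz row sum
  have hT : ∑ j : Fin n, toeplitzMat (gSymb α) n i j
      = (∑ d ∈ Icc 1 k, gSymb α d) + gSymb α 0 + ∑ d ∈ Icc 1 (n - 1 - k), gSymb α d := by
    have e0 : ∑ j : Fin n, toeplitzMat (gSymb α) n i j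
        = ∑ j ∈ range n, gSymb α (((k : ℤ) - (j : ℤ)).natAbs) := by
      rw [← Fin.sum_univ_eq_sum_range (fun j => gSymb α (((k : ℤ) - (j : ℤ)).natAbs)) n]
      rfl
    rw [e0, ← Finset.sum_range_add_sum_Ico _ (le_of_lt hk),
      Finset.sum_eq_sum_Ico_succ_bot hk]
    have eL : ∑ j ∈ range k, gSymb α (((k : ℤ) - (j : ℤ)).natAbs) = ∑ d ∈ Icc 1 k, gSymb α d := by
      apply Finset.sum_nbij' (fun j => k - j) (fun d => k - d)
      · intro a ha; simp only [mem_range] at ha; simp only [mem_Icc]; omega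
      · intro a ha; simp only [mem_Icc] at ha; simp only [mem_range]; omega
      · intro a ha; simp only [mem_range] at ha; omega
      · intro a ha; simp only [mem_Icc] at ha; omega
      · intro a ha; simp only [mem_range] at ha; congr 1; omega
    have eC : gSymb α (((k : ℤ) - (k : ℤ)).natAbs) = gSymb α 0 := by norm_num
    have eR : ∑ j ∈ Ico (k + 1) n, gSymb α (((k : ℤ) - (j : ℤ)).natAbs)
        = ∑ d ∈ Icc 1 (n - 1 - k), gSymb α d := by
      apply Finset.sum_nbij' (fun j => j - k) (fun d => d + k)
      · intro a ha; simp only [mem_Ico] at ha; simp only [mem_Icc]; omega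
      · intro a ha; simp only [mem_Icc] at ha; simp only [mem_Ico]; omega
      · intro a ha; simp only [mem_Ico] at ha; omega
      · intro a ha; simp only [mem_Icc] at ha; omega
      · intro a ha; simp only [mem_Ico] at ha; congr 1; omega
    rw [eL, eC, eR]; ring
  -- Hankel row sum bound
  have hH : ∑ j : Fin n, hankelMat (gSymb α) n i j
      ≤ (∑ s ∈ Icc (k + 2) (n - 1), gSymb α s) + ∑ s ∈ Icc (n - k + 1) (n - 1), gSymb α s := by
    have e0 : ∑ j : Fin n, hankelMat (gSymb α) n i j
        = ∑ j ∈ range n, ((if k + j + 2 ≤ n - 1 then gSymb α (k + j + 2) else 0)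
            + (if n + 3 ≤ k + j + 2 then gSymb α (2 * n + 2 - (k + j + 2)) else 0)) := by
      rw [← Fin.sum_univ_eq_sum_range (fun j => ((if k + j + 2 ≤ n - 1 then gSymb α (k + j + 2) else 0)
            + (if n + 3 ≤ k + j + 2 then gSymb α (2 * n + 2 - (k + j + 2)) else 0))) n]
      apply Finset.sum_congr rfl
      intro j _
      rw [hankel_apply]
      have hkk : k = (i : ℕ) := rfl
      split_ifs
      all_goals (try ring)
      all_goals (exfalso; omega)
    rw [e0, Finset.sum_add_distrib]
    have b1 : ∑ j ∈ range n, (if k + j + 2 ≤ n - 1 then gSymb α (k + j + 2) else 0)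
        ≤ ∑ s ∈ Icc (k + 2) (n - 1), gSymb α s := by
      rw [← Finset.sum_filter]
      rw [show ∑ j ∈ filter (fun j => k + j + 2 ≤ n - 1) (range n), gSymb α (k + j + 2)
          = ∑ s ∈ image (fun j => k + j + 2) (filter (fun j => k + j + 2 ≤ n - 1) (range n)), gSymb α s
        from (Finset.sum_image (by intro x _ y _ h; simp only at h; omega)).symm]
      apply Finset.sum_le_sum_of_subset_of_nonneg
      · intro s hs
        simp only [mem_image, mem_filter, mem_range] at hs
        obtain ⟨j, ⟨hj, hcond⟩, rfl⟩ := hs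
        simp only [mem_Icc]; omega
      · intro s hs _
        simp only [mem_Icc] at hs
        exact gSymb_nonneg α h1 h2 s (by omega)
    have b3 : ∑ j ∈ range n, (if n + 3 ≤ k + j + 2 then gSymb α (2 * n + 2 - (k + j + 2)) else 0)
        ≤ ∑ s ∈ Icc (n - k + 1) (n - 1), gSymb α s := by
      rw [← Finset.sum_filter]
      rw [show ∑ j ∈ filter (fun j => n + 3 ≤ k + j + 2) (range n), gSymb α (2 * n + 2 - (k + j + 2))
          = ∑ s ∈ image (fun j => 2 * n + 2 - (k + j + 2)) (filter (fun j => n + 3 ≤ k + j + 2) (range n)), gSymb α s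
        from (Finset.sum_image (by
          intro x hx y hy h
          simp only [coe_filter, mem_filter, mem_range, Set.mem_setOf_eq] at hx hy h
          omega)).symm]
      apply Finset.sum_le_sum_of_subset_of_nonneg
      · intro s hs
        simp only [mem_image, mem_filter, mem_range] at hs
        obtain ⟨j, ⟨hj, hcond⟩, rfl⟩ := hs
        simp only [mem_Icc]; omega
      · intro s hs _
        simp only [mem_Icc] at hs
        exact gSymb_nonneg α h1 h2 s (by omega)
    exact add_le_add b1 b3
  -- merging bounds
  have merge : ∀ a b : ℕ, a + 2 ≤ b + 2 → b ≤ n - 1 →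
      (∑ d ∈ Icc 1 a, gSymb α d) + ∑ s ∈ Icc (a + 2) b, gSymb α s
        ≤ ∑ d ∈ Icc 1 n, gSymb α d := by
    intro a b _ hbn
    rw [← Finset.sum_union (by
      rw [Finset.disjoint_left]
      intro x hx hx'
      simp only [mem_Icc] at hx hx'
      omega)]
    apply Finset.sum_le_sum_of_subset_of_nonneg
    · intro s hs
      simp only [mem_union, mem_Icc] at hs
      simp only [mem_Icc]
      omega
    · intro s hs _
      simp only [mem_Icc] at hs
      exact gSymb_nonneg α h1 h2 s (by omega)
  have m1 : (∑ d ∈ Icc 1 k, gSymb α d) + ∑ s ∈ Icc (k + 2) (n - 1), gSymb α s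
      ≤ ∑ d ∈ Icc 1 n, gSymb α d := merge k (n - 1) (by omega) (by omega)
  have m2 : (∑ d ∈ Icc 1 (n - 1 - k), gSymb α d) + ∑ s ∈ Icc (n - k + 1) (n - 1), gSymb α s
      ≤ ∑ d ∈ Icc 1 n, gSymb α d := by
    have := merge (n - 1 - k) (n - 1) (by omega) (by omega)
    rw [show n - 1 - k + 2 = n - k + 1 from by omega] at this
    exact this
  have hlt := sum_gSymb_lt α h1 h2 n hn
  have hg0 : gSymb α 0 = -(2 * α) := by
    show 2 * g α 1 = _
    rw [g_one]; ring
  rw [Finset.sum_sub_distrib, Finset.sum_neg_distrib, hT, hg0]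
  linarith

open Finset in
lemma quad_dd {n : ℕ} (P : Matrix (Fin n) (Fin n) ℝ)
    (hsym : ∀ i j, P i j = P j i)
    (hoff : ∀ i j, i ≠ j → P i j ≤ 0)
    (y : Fin n → ℝ) :
    ∑ i, (∑ j, P i j) * (y i) ^ 2 ≤ ∑ i, ∑ j, y i * P i j * y j := by
  have key : ∑ i, ∑ j, P i j * (y i - y j) ^ 2 ≤ 0 := by
    apply Finset.sum_nonpos
    intro i _
    apply Finset.sum_nonpos
    intro j _
    rcases eq_or_ne i j with rfl | hij
    · simp
    · exact mul_nonpos_of_nonpos_of_nonneg (hoff i j hij) (sq_nonneg _)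
  have expand : ∑ i, ∑ j, P i j * (y i - y j) ^ 2
      = (∑ i, ∑ j, P i j * (y i) ^ 2) - 2 * (∑ i, ∑ j, y i * P i j * y j)
        + ∑ i, ∑ j, P i j * (y j) ^ 2 := by
    rw [Finset.mul_sum, ← Finset.sum_sub_distrib, ← Finset.sum_add_distrib]
    apply Finset.sum_congr rfl
    intro i _
    rw [Finset.mul_sum, ← Finset.sum_sub_distrib, ← Finset.sum_add_distrib]
    apply Finset.sum_congr rfl
    intro j _
    ring
  have flip : ∑ i, ∑ j, P i j * (y j) ^ 2 = ∑ i, ∑ j, P i j * (y i) ^ 2 := by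
    rw [Finset.sum_comm]
    apply Finset.sum_congr rfl
    intro j _
    apply Finset.sum_congr rfl
    intro i _
    rw [hsym]
  have hA : ∑ i, ∑ j, P i j * (y i) ^ 2 = ∑ i, (∑ j, P i j) * (y i) ^ 2 := by
    apply Finset.sum_congr rfl
    intro i _
    rw [Finset.sum_mul]
  linarith [key, expand, flip, hA]

section oneD
variable (α : ℝ) (h1 : 1 < α) (h2 : α < 2) (n : ℕ) (hn : 1 ≤ n)

include h1 h2 hn

open Finset in
lemma master_compare (c : ℝ) (hc : -1 ≤ c) (hc' : c ≤ 3) (x : Fin n → ℝ) :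
    ∑ i, ∑ j, |x i| * (-(toeplitzMat (gSymb α) n i j) - hankelMat (gSymb α) n i j) * |x j|
      ≤ ∑ i, ∑ j, x i * (c * hankelMat (gSymb α) n i j - toeplitzMat (gSymb α) n i j) * x j := by
  apply Finset.sum_le_sum
  intro i _
  apply Finset.sum_le_sum
  intro j _
  have hH0 : 0 ≤ hankelMat (gSymb α) n i j := hankel_nonneg α h1 h2 n i j
  rcases eq_or_ne i j with rfl | hij
  · have habs : |x i| * |x i| = x i * x i := abs_mul_abs_self _
    set T := toeplitzMat (gSymb α) n i i
    set H := hankelMat (gSymb α) n i i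
    have e1 : |x i| * (-T - H) * |x i| = (-T - H) * (x i * x i) := by
      rw [show x i * x i = |x i| * |x i| from habs.symm]; ring
    have e2 : x i * (c * H - T) * x i = (c * H - T) * (x i * x i) := by ring
    rw [e1, e2]
    nlinarith [mul_nonneg (mul_nonneg (by linarith : (0:ℝ) ≤ c + 1) hH0) (mul_self_nonneg (x i))]
  · have hle : hankelMat (gSymb α) n i j ≤ toeplitzMat (gSymb α) n i j :=
      hankel_le α h1 h2 n i j hij
    have hT0 : 0 ≤ toeplitzMat (gSymb α) n i j := le_trans hH0 hle
    set t := toeplitzMat (gSymb α) n i j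
    set h := hankelMat (gSymb α) n i j
    have habs : |x i| * |x j| = |x i * x j| := (abs_mul _ _).symm
    rcases abs_cases (x i * x j) with ⟨he, hpos⟩ | ⟨he, hneg⟩
    · nlinarith [mul_nonneg (mul_nonneg (by linarith : (0:ℝ) ≤ c + 1) hH0) hpos]
    · nlinarith [mul_nonpos_of_nonpos_of_nonneg
        (by nlinarith : (c - 1) * h - 2 * t ≤ 0) (by linarith : (0:ℝ) ≤ -(x i * x j))]

open Finset in
lemma S_nonneg (c : ℝ) (hc : -1 ≤ c) (hc' : c ≤ 3) (x : Fin n → ℝ) :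
    0 ≤ ∑ i, ∑ j, x i * (c * hankelMat (gSymb α) n i j - toeplitzMat (gSymb α) n i j) * x j ∧
    (x ≠ 0 → 0 < ∑ i, ∑ j, x i * (c * hankelMat (gSymb α) n i j - toeplitzMat (gSymb α) n i j) * x j) := by
  set P : Matrix (Fin n) (Fin n) ℝ :=
    fun i j => -(toeplitzMat (gSymb α) n i j) - hankelMat (gSymb α) n i j with hP
  have hsym : ∀ i j, P i j = P j i := by
    intro i j
    simp only [hP]
    rw [toeplitz_symm α h1 h2 n i j, hankel_symm α h1 h2 n i j]
  have hoff : ∀ i j, i ≠ j → P i j ≤ 0 := by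
    intro i j hij
    simp only [hP]
    have := toeplitz_offdiag_nonneg α h1 h2 n i j hij
    have := hankel_nonneg α h1 h2 n i j
    linarith
  have hrow : ∀ i, 0 < ∑ j, P i j := fun i => row_pos α h1 h2 n hn i
  have hdd := quad_dd P hsym hoff (fun i => |x i|)
  have hmc := master_compare α h1 h2 n hn c hc hc' x
  have hbase : ∀ i, 0 ≤ (∑ j, P i j) * |x i| ^ 2 := by
    intro i
    exact mul_nonneg (le_of_lt (hrow i)) (sq_nonneg _)
  constructor
  · refine le_trans (le_trans (Finset.sum_nonneg fun i _ => hbase i) hdd) ?_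
    exact hmc
  · intro hx
    obtain ⟨i0, hi0⟩ : ∃ i0, x i0 ≠ 0 := Function.ne_iff.mp hx
    have hpos : 0 < ∑ i, (∑ j, P i j) * |x i| ^ 2 := by
      apply Finset.sum_pos' (fun i _ => hbase i)
      exact ⟨i0, Finset.mem_univ _, mul_pos (hrow i0) (by positivity)⟩
    linarith
end oneD

open Matrix Kronecker

open Finset in
lemma kron_left_expand {n₁ n₂ : ℕ} (M : Matrix (Fin n₁) (Fin n₁) ℝ) (x : Fin n₂ × Fin n₁ → ℝ) :
    x ⬝ᵥ (((1 : Matrix (Fin n₂) (Fin n₂) ℝ) ⊗ₖ M) *ᵥ x)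
      = ∑ r : Fin n₂, ∑ i, ∑ j, x (r, i) * M i j * x (r, j) := by
  simp only [dotProduct, Matrix.mulVec, Fintype.sum_prod_type,
    Matrix.kroneckerMap_apply, Matrix.one_apply, ite_mul, one_mul, zero_mul,
    Finset.sum_ite_irrel, Finset.sum_const_zero, Finset.sum_ite_eq, Finset.mem_univ, if_true]
  apply Finset.sum_congr rfl; intro r _
  apply Finset.sum_congr rfl; intro i _
  rw [Finset.mul_sum]
  apply Finset.sum_congr rfl; intro j _
  ring

open Finset in
lemma kron_right_expand {n₁ n₂ : ℕ} (M : Matrix (Fin n₂) (Fin n₂) ℝ) (x : Fin n₂ × Fin n₁ → ℝ) :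
    x ⬝ᵥ ((M ⊗ₖ (1 : Matrix (Fin n₁) (Fin n₁) ℝ)) *ᵥ x)
      = ∑ i : Fin n₁, ∑ r, ∑ s, x (r, i) * M r s * x (s, i) := by
  simp only [dotProduct, Matrix.mulVec, Fintype.sum_prod_type,
    Matrix.kroneckerMap_apply, Matrix.one_apply, mul_ite, ite_mul, one_mul, zero_mul, mul_zero,
    Finset.sum_ite_irrel, Finset.sum_const_zero, Finset.sum_ite_eq, Finset.mem_univ, if_true]
  rw [Finset.sum_comm]
  apply Finset.sum_congr rfl; intro i _
  apply Finset.sum_congr rfl; intro r _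
  rw [Finset.mul_sum]
  apply Finset.sum_congr rfl; intro s _
  ring

open Finset in
lemma herm_expand {ι : Type*} [Fintype ι] (M : Matrix ι ι ℝ)
    (hsym : ∀ i j, M i j = M j i) (z : ι → ℂ) :
    star z ⬝ᵥ ((M.map (fun a : ℝ => (a : ℂ))) *ᵥ z)
      = (((∑ i, ∑ j, (z i).re * M i j * (z j).re)
          + ∑ i, ∑ j, (z i).im * M i j * (z j).im : ℝ) : ℂ) := by
  have e0 : star z ⬝ᵥ ((M.map (fun a : ℝ => (a : ℂ))) *ᵥ z)
      = ∑ i, ∑ j, ((M i j : ℂ)) * ((starRingEnd ℂ) (z i) * z j) := by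
    simp only [dotProduct, Matrix.mulVec, Matrix.map_apply, Pi.star_apply,
      RCLike.star_def]
    apply Finset.sum_congr rfl; intro i _
    rw [Finset.mul_sum]
    apply Finset.sum_congr rfl; intro j _
    ring
  have term : ∀ i j, ((M i j : ℂ)) * ((starRingEnd ℂ) (z i) * z j)
      = ((M i j * ((z i).re * (z j).re + (z i).im * (z j).im) : ℝ) : ℂ)
        + ((M i j * ((z i).re * (z j).im - (z i).im * (z j).re) : ℝ) : ℂ) * Complex.I := by
    intro i j
    apply Complex.ext
    · simp [Complex.mul_re, Complex.mul_im, Complex.conj_re, Complex.conj_im]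
    · simp [Complex.mul_re, Complex.mul_im, Complex.conj_re, Complex.conj_im]
      left; ring
  have swap : ∑ i, ∑ j, M i j * ((z i).re * (z j).im)
      = ∑ i, ∑ j, M i j * ((z i).im * (z j).re) := by
    rw [Finset.sum_comm]
    apply Finset.sum_congr rfl; intro j _
    apply Finset.sum_congr rfl; intro i _
    rw [hsym]; ring
  have imzero : ∑ i, ∑ j, M i j * ((z i).re * (z j).im - (z i).im * (z j).re) = 0 := by
    have h0 : ∀ i : ι, ∑ j, M i j * ((z i).re * (z j).im - (z i).im * (z j).re)
        = (∑ j, M i j * ((z i).re * (z j).im)) - ∑ j, M i j * ((z i).im * (z j).re) := by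
      intro i
      rw [← Finset.sum_sub_distrib]
      apply Finset.sum_congr rfl; intro j _; ring
    rw [Finset.sum_congr rfl (fun i _ => h0 i), Finset.sum_sub_distrib, swap, sub_self]
  have realeq : ∑ i, ∑ j, M i j * ((z i).re * (z j).re + (z i).im * (z j).im)
      = (∑ i, ∑ j, (z i).re * M i j * (z j).re)
          + ∑ i, ∑ j, (z i).im * M i j * (z j).im := by
    rw [← Finset.sum_add_distrib]
    apply Finset.sum_congr rfl; intro i _
    rw [← Finset.sum_add_distrib]
    apply Finset.sum_congr rfl; intro j _
    ring
  calc star z ⬝ᵥ ((M.map (fun a : ℝ => (a : ℂ))) *ᵥ z)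
      = ∑ i, ∑ j, (((M i j * ((z i).re * (z j).re + (z i).im * (z j).im) : ℝ) : ℂ)
        + ((M i j * ((z i).re * (z j).im - (z i).im * (z j).re) : ℝ) : ℂ) * Complex.I) := by
        rw [e0]
        exact Finset.sum_congr rfl fun i _ => Finset.sum_congr rfl fun j _ => term i j
    _ = ((∑ i, ∑ j, M i j * ((z i).re * (z j).re + (z i).im * (z j).im) : ℝ) : ℂ)
        + ((∑ i, ∑ j, M i j * ((z i).re * (z j).im - (z i).im * (z j).re) : ℝ) : ℂ) * Complex.I := by
        simp only [Finset.sum_add_distrib, ← Finset.sum_mul]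
        push_cast
        ring
    _ = (((∑ i, ∑ j, (z i).re * M i j * (z j).re)
          + ∑ i, ∑ j, (z i).im * M i j * (z j).im : ℝ) : ℂ) := by
        rw [imzero, realeq]
        push_cast
        ring

lemma ratio_bounds (ra rt : ℝ) (hneg : 0 < -rt) (hlo : 0 < rt - 2 * ra) (hhi : 0 < 2 * ra - 3 * rt) :
    1 / 2 < ra / rt ∧ ra / rt < 3 / 2 := by
  have ht : (0:ℝ) < -rt := hneg
  have he : ra / rt = (-ra) / (-rt) := by rw [neg_div_neg_eq]
  constructor
  · rw [he, lt_div_iff₀ ht]; linarith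
  · rw [he, div_lt_iff₀ ht]; linarith

lemma Gmat_eq (α : ℝ) (n : ℕ) : Gmat α n = toeplitzMat (gSymb α) n := rfl

lemma tauMat_apply (t : ℕ → ℝ) (n : ℕ) (i j : Fin n) :
    tauMat t n i j = toeplitzMat t n i j - hankelMat t n i j := rfl

open Finset in
lemma dsum_split {n : ℕ} (T H : Matrix (Fin n) (Fin n) ℝ) (y : Fin n → ℝ) :
    ∑ i, ∑ j, y i * (T i j - H i j) * y j
      = (∑ i, ∑ j, y i * T i j * y j) - ∑ i, ∑ j, y i * H i j * y j := by
  rw [← Finset.sum_sub_distrib]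
  apply Finset.sum_congr rfl; intro i _
  rw [← Finset.sum_sub_distrib]
  apply Finset.sum_congr rfl; intro j _
  ring

open Finset in
lemma dsum_comb {n : ℕ} (T H : Matrix (Fin n) (Fin n) ℝ) (y : Fin n → ℝ) (c : ℝ) :
    ∑ i, ∑ j, y i * (c * H i j - T i j) * y j
      = c * (∑ i, ∑ j, y i * H i j * y j) - ∑ i, ∑ j, y i * T i j * y j := by
  rw [Finset.mul_sum, ← Finset.sum_sub_distrib]
  apply Finset.sum_congr rfl; intro i _
  rw [Finset.mul_sum, ← Finset.sum_sub_distrib]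
  apply Finset.sum_congr rfl; intro j _
  ring

section core
variable (α₁ α₂ : ℝ) (ha₁ : 1 < α₁) (hb₁ : α₁ < 2) (ha₂ : 1 < α₂) (hb₂ : α₂ < 2)
  (n₁ n₂ : ℕ) (hn₁ : 1 ≤ n₁) (hn₂ : 1 ≤ n₂) (cx cy : ℝ) (hcx : 0 < cx) (hcy : 0 < cy)

include ha₁ hb₁ ha₂ hb₂ hn₁ hn₂ hcx hcy

open Finset in
lemma core_bounds (x : Fin n₂ × Fin n₁ → ℝ) :
    (0 ≤ -(x ⬝ᵥ (tau1A α₁ α₂ n₁ n₂ cx cy *ᵥ x))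
      ∧ 0 ≤ (x ⬝ᵥ (tau1A α₁ α₂ n₁ n₂ cx cy *ᵥ x)) - 2 * (x ⬝ᵥ (Amat α₁ α₂ n₁ n₂ cx cy *ᵥ x))
      ∧ 0 ≤ 2 * (x ⬝ᵥ (Amat α₁ α₂ n₁ n₂ cx cy *ᵥ x)) - 3 * (x ⬝ᵥ (tau1A α₁ α₂ n₁ n₂ cx cy *ᵥ x)))
    ∧ (x ≠ 0 →
      (0 < -(x ⬝ᵥ (tau1A α₁ α₂ n₁ n₂ cx cy *ᵥ x))
      ∧ 0 < (x ⬝ᵥ (tau1A α₁ α₂ n₁ n₂ cx cy *ᵥ x)) - 2 * (x ⬝ᵥ (Amat α₁ α₂ n₁ n₂ cx cy *ᵥ x))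
      ∧ 0 < 2 * (x ⬝ᵥ (Amat α₁ α₂ n₁ n₂ cx cy *ᵥ x)) - 3 * (x ⬝ᵥ (tau1A α₁ α₂ n₁ n₂ cx cy *ᵥ x)))) := by
  set T₁ := toeplitzMat (gSymb α₁) n₁ with hT₁
  set H₁ := hankelMat (gSymb α₁) n₁ with hH₁
  set T₂ := toeplitzMat (gSymb α₂) n₂ with hT₂
  set H₂ := hankelMat (gSymb α₂) n₂ with hH₂
  -- expansions
  have hA : x ⬝ᵥ (Amat α₁ α₂ n₁ n₂ cx cy *ᵥ x)
      = cx * (∑ r, ∑ i, ∑ j, x (r, i) * T₁ i j * x (r, j))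
        + cy * (∑ i, ∑ r, ∑ s, x (r, i) * T₂ r s * x (s, i)) := by
    rw [Amat, Matrix.add_mulVec, Matrix.smul_mulVec, Matrix.smul_mulVec,
      dotProduct_add, dotProduct_smul, dotProduct_smul,
      smul_eq_mul, smul_eq_mul, kron_left_expand, kron_right_expand, Gmat_eq, Gmat_eq]
  have hτ : x ⬝ᵥ (tau1A α₁ α₂ n₁ n₂ cx cy *ᵥ x)
      = cx * ((∑ r, ∑ i, ∑ j, x (r, i) * T₁ i j * x (r, j))
              - ∑ r, ∑ i, ∑ j, x (r, i) * H₁ i j * x (r, j))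
        + cy * ((∑ i, ∑ r, ∑ s, x (r, i) * T₂ r s * x (s, i))
              - ∑ i, ∑ r, ∑ s, x (r, i) * H₂ r s * x (s, i)) := by
    rw [tau1A, Matrix.add_mulVec, Matrix.smul_mulVec, Matrix.smul_mulVec,
      dotProduct_add, dotProduct_smul, dotProduct_smul,
      smul_eq_mul, smul_eq_mul, kron_left_expand, kron_right_expand]
    rw [← Finset.sum_sub_distrib, ← Finset.sum_sub_distrib]
    congr 2
    · apply Finset.sum_congr rfl; intro r _
      rw [← dsum_split]
      apply Finset.sum_congr rfl; intro i _
      apply Finset.sum_congr rfl; intro j _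
      rw [tauMat_apply, ← hT₁, ← hH₁]
    · apply Finset.sum_congr rfl; intro i _
      rw [← dsum_split]
      apply Finset.sum_congr rfl; intro r _
      apply Finset.sum_congr rfl; intro s _
      rw [tauMat_apply, ← hT₂, ← hH₂]
  -- one-dimensional positivity per slice, for c ∈ {-1, 1, 3}
  have S1 := fun (c : ℝ) (hc : -1 ≤ c) (hc' : c ≤ 3) (r : Fin n₂) =>
    S_nonneg α₁ ha₁ hb₁ n₁ hn₁ c hc hc' (fun i => x (r, i))
  have S2 := fun (c : ℝ) (hc : -1 ≤ c) (hc' : c ≤ 3) (i : Fin n₁) =>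
    S_nonneg α₂ ha₂ hb₂ n₂ hn₂ c hc hc' (fun r => x (r, i))
  -- the combined quantity for each c
  have key : ∀ (c : ℝ), -1 ≤ c → c ≤ 3 →
      (0 ≤ cx * (∑ r, ∑ i, ∑ j, x (r, i) * (c * H₁ i j - T₁ i j) * x (r, j))
          + cy * (∑ i, ∑ r, ∑ s, x (r, i) * (c * H₂ r s - T₂ r s) * x (s, i)))
      ∧ (x ≠ 0 → 0 < cx * (∑ r, ∑ i, ∑ j, x (r, i) * (c * H₁ i j - T₁ i j) * x (r, j))
          + cy * (∑ i, ∑ r, ∑ s, x (r, i) * (c * H₂ r s - T₂ r s) * x (s, i))) := by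
    intro c hc hc'
    have t1 : ∀ r, 0 ≤ ∑ i, ∑ j, x (r, i) * (c * H₁ i j - T₁ i j) * x (r, j) :=
      fun r => (S1 c hc hc' r).1
    have t2 : ∀ i, 0 ≤ ∑ r, ∑ s, x (r, i) * (c * H₂ r s - T₂ r s) * x (s, i) :=
      fun i => (S2 c hc hc' i).1
    have sum1 : 0 ≤ ∑ r, ∑ i, ∑ j, x (r, i) * (c * H₁ i j - T₁ i j) * x (r, j) :=
      Finset.sum_nonneg fun r _ => t1 r
    have sum2 : 0 ≤ ∑ i, ∑ r, ∑ s, x (r, i) * (c * H₂ r s - T₂ r s) * x (s, i) :=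
      Finset.sum_nonneg fun i _ => t2 i
    constructor
    · have := mul_nonneg (le_of_lt hcx) sum1
      have := mul_nonneg (le_of_lt hcy) sum2
      linarith
    · intro hx
      obtain ⟨⟨r0, i0⟩, hp⟩ : ∃ p, x p ≠ 0 := Function.ne_iff.mp hx
      have hslice : (fun i => x (r0, i)) ≠ 0 := by
        intro h0
        exact hp (congrFun h0 i0)
      have spos : 0 < ∑ r, ∑ i, ∑ j, x (r, i) * (c * H₁ i j - T₁ i j) * x (r, j) := by
        apply Finset.sum_pos' (fun r _ => t1 r)
        exact ⟨r0, Finset.mem_univ _, (S1 c hc hc' r0).2 hslice⟩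
      nlinarith [mul_pos hcx spos, mul_nonneg (le_of_lt hcy) sum2]
  -- rewrite the c-quantities in terms of the four base sums
  have comb : ∀ (c : ℝ),
      cx * (∑ r, ∑ i, ∑ j, x (r, i) * (c * H₁ i j - T₁ i j) * x (r, j))
        + cy * (∑ i, ∑ r, ∑ s, x (r, i) * (c * H₂ r s - T₂ r s) * x (s, i))
      = cx * (c * (∑ r, ∑ i, ∑ j, x (r, i) * H₁ i j * x (r, j))
              - ∑ r, ∑ i, ∑ j, x (r, i) * T₁ i j * x (r, j))
        + cy * (c * (∑ i, ∑ r, ∑ s, x (r, i) * H₂ r s * x (s, i))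
              - ∑ i, ∑ r, ∑ s, x (r, i) * T₂ r s * x (s, i)) := by
    intro c
    congr 2
    · rw [Finset.mul_sum, ← Finset.sum_sub_distrib]
      apply Finset.sum_congr rfl; intro r _
      rw [dsum_comb]
    · rw [Finset.mul_sum, ← Finset.sum_sub_distrib]
      apply Finset.sum_congr rfl; intro i _
      rw [dsum_comb]
  have k1 := key 1 (by norm_num) (by norm_num)
  have km := key (-1) (by norm_num) (by norm_num)
  have kp := key 3 (by norm_num) (by norm_num)
  rw [comb] at k1 km kp
  constructor
  · refine ⟨by rw [hτ]; linarith [k1.1], by rw [hτ, hA]; linarith [km.1], by rw [hτ, hA]; linarith [kp.1]⟩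
  · intro hx
    exact ⟨by rw [hτ]; linarith [k1.2 hx], by rw [hτ, hA]; linarith [km.2 hx], by rw [hτ, hA]; linarith [kp.2 hx]⟩

end core

lemma one_symm {n : ℕ} (i j : Fin n) :
    (1 : Matrix (Fin n) (Fin n) ℝ) i j = (1 : Matrix (Fin n) (Fin n) ℝ) j i := by
  rw [Matrix.one_apply, Matrix.one_apply]
  simp [eq_comm]

lemma tauMat_symm (α : ℝ) (h1 : 1 < α) (h2 : α < 2) (n : ℕ) (i j : Fin n) :
    tauMat (gSymb α) n i j = tauMat (gSymb α) n j i := by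
  rw [tauMat_apply, tauMat_apply, toeplitz_symm α h1 h2 n i j, hankel_symm α h1 h2 n i j]

lemma Amat_symm (α₁ α₂ : ℝ) (ha₁ : 1 < α₁) (hb₁ : α₁ < 2) (ha₂ : 1 < α₂) (hb₂ : α₂ < 2)
    (n₁ n₂ : ℕ) (cx cy : ℝ) (p q : Fin n₂ × Fin n₁) :
    Amat α₁ α₂ n₁ n₂ cx cy p q = Amat α₁ α₂ n₁ n₂ cx cy q p := by
  obtain ⟨r, i⟩ := p; obtain ⟨s, j⟩ := q
  simp only [Amat, Matrix.add_apply, Matrix.smul_apply, Matrix.kroneckerMap_apply,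
    smul_eq_mul]
  rw [one_symm r s, one_symm i j, Gmat_eq, Gmat_eq,
    toeplitz_symm α₁ ha₁ hb₁ n₁ i j, toeplitz_symm α₂ ha₂ hb₂ n₂ r s]

lemma tau1A_symm (α₁ α₂ : ℝ) (ha₁ : 1 < α₁) (hb₁ : α₁ < 2) (ha₂ : 1 < α₂) (hb₂ : α₂ < 2)
    (n₁ n₂ : ℕ) (cx cy : ℝ) (p q : Fin n₂ × Fin n₁) :
    tau1A α₁ α₂ n₁ n₂ cx cy p q = tau1A α₁ α₂ n₁ n₂ cx cy q p := by
  obtain ⟨r, i⟩ := p; obtain ⟨s, j⟩ := q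
  simp only [tau1A, Matrix.add_apply, Matrix.smul_apply, Matrix.kroneckerMap_apply,
    smul_eq_mul]
  rw [one_symm r s, one_symm i j, tauMat_symm α₁ ha₁ hb₁ n₁ i j, tauMat_symm α₂ ha₂ hb₂ n₂ r s]

theorem stmt17 (α₁ α₂ : ℝ) (hα₁ : 1 < α₁ ∧ α₁ < 2) (hα₂ : 1 < α₂ ∧ α₂ < 2)
    (n₁ n₂ : ℕ) (hn₁ : 1 ≤ n₁) (hn₂ : 1 ≤ n₂) (cx cy : ℝ) (hcx : 0 < cx) (hcy : 0 < cy) :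
    IsUnit (tau1A α₁ α₂ n₁ n₂ cx cy) ∧
      (∀ (μ : ℂ) (z : Fin n₂ × Fin n₁ → ℂ), z ≠ 0 →
        (((tau1A α₁ α₂ n₁ n₂ cx cy)⁻¹ * Amat α₁ α₂ n₁ n₂ cx cy).map
            (fun a : ℝ => (a : ℂ))) *ᵥ z = μ • z →
        μ.im = 0 ∧ 1 / 2 < μ.re ∧ μ.re < 3 / 2) ∧
      ∀ x : Fin n₂ × Fin n₁ → ℝ, x ≠ 0 →
        1 / 2 < (x ⬝ᵥ (Amat α₁ α₂ n₁ n₂ cx cy *ᵥ x)) /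
            (x ⬝ᵥ (tau1A α₁ α₂ n₁ n₂ cx cy *ᵥ x)) ∧
          (x ⬝ᵥ (Amat α₁ α₂ n₁ n₂ cx cy *ᵥ x)) /
            (x ⬝ᵥ (tau1A α₁ α₂ n₁ n₂ cx cy *ᵥ x)) < 3 / 2 := by
  obtain ⟨ha₁, hb₁⟩ := hα₁
  obtain ⟨ha₂, hb₂⟩ := hα₂
  have core := core_bounds α₁ α₂ ha₁ hb₁ ha₂ hb₂ n₁ n₂ hn₁ hn₂ cx cy hcx hcy
  -- invertibility
  have hdet : IsUnit (tau1A α₁ α₂ n₁ n₂ cx cy).det := by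
    rw [isUnit_iff_ne_zero]
    intro h0
    obtain ⟨v, hv, hv0⟩ := Matrix.exists_mulVec_eq_zero_iff.mpr h0
    have := ((core v).2 hv).1
    rw [hv0] at this
    simp [dotProduct_zero] at this
  have hunit : IsUnit (tau1A α₁ α₂ n₁ n₂ cx cy) :=
    (Matrix.isUnit_iff_isUnit_det _).mpr hdet
  refine ⟨hunit, ?_, ?_⟩
  · -- complex eigenvalue part
    intro μ z hz hzeq
    set τm := tau1A α₁ α₂ n₁ n₂ cx cy with hτm
    set Am := Amat α₁ α₂ n₁ n₂ cx cy with hAm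
    have hmm : τm * (τm⁻¹ * Am) = Am := by
      rw [← mul_assoc, Matrix.mul_nonsing_inv _ hdet, one_mul]
    have hCmul : (Am.map (fun a : ℝ => (a : ℂ)))
        = (τm.map (fun a : ℝ => (a : ℂ))) * ((τm⁻¹ * Am).map (fun a : ℝ => (a : ℂ))) := by
      have := Matrix.map_mul (L := τm) (M := τm⁻¹ * Am) (f := Complex.ofRealHom)
      rw [hmm] at this
      exact this
    have hAz : (Am.map (fun a : ℝ => (a : ℂ))) *ᵥ z
        = μ • ((τm.map (fun a : ℝ => (a : ℂ))) *ᵥ z) := by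
      rw [hCmul, ← Matrix.mulVec_mulVec, hzeq, Matrix.mulVec_smul]
    -- hermitian forms
    set u : Fin n₂ × Fin n₁ → ℝ := fun p => (z p).re with hu
    set v : Fin n₂ × Fin n₁ → ℝ := fun p => (z p).im with hv
    have hermA := herm_expand Am (Amat_symm α₁ α₂ ha₁ hb₁ ha₂ hb₂ n₁ n₂ cx cy) z
    have hermT := herm_expand τm (tau1A_symm α₁ α₂ ha₁ hb₁ ha₂ hb₂ n₁ n₂ cx cy) z
    -- quadratic forms of u and v
    have quadA : ∀ w : Fin n₂ × Fin n₁ → ℝ,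
        ∑ i, ∑ j, w i * Am i j * w j = w ⬝ᵥ (Am *ᵥ w) := by
      intro w
      simp only [dotProduct, Matrix.mulVec]
      apply Finset.sum_congr rfl; intro i _
      rw [Finset.mul_sum]
      apply Finset.sum_congr rfl; intro j _
      ring
    have quadT : ∀ w : Fin n₂ × Fin n₁ → ℝ,
        ∑ i, ∑ j, w i * τm i j * w j = w ⬝ᵥ (τm *ᵥ w) := by
      intro w
      simp only [dotProduct, Matrix.mulVec]
      apply Finset.sum_congr rfl; intro i _
      rw [Finset.mul_sum]
      apply Finset.sum_congr rfl; intro j _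
      ring
    set ra : ℝ := u ⬝ᵥ (Am *ᵥ u) + v ⬝ᵥ (Am *ᵥ v) with hra
    set rt : ℝ := u ⬝ᵥ (τm *ᵥ u) + v ⬝ᵥ (τm *ᵥ v) with hrt
    have hermA' : star z ⬝ᵥ ((Am.map (fun a : ℝ => (a : ℂ))) *ᵥ z) = ((ra : ℝ) : ℂ) := by
      rw [hermA, hra, quadA u, quadA v]
    have hermT' : star z ⬝ᵥ ((τm.map (fun a : ℝ => (a : ℂ))) *ᵥ z) = ((rt : ℝ) : ℂ) := by
      rw [hermT, hrt, quadT u, quadT v]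
    have heq : ((ra : ℝ) : ℂ) = μ * ((rt : ℝ) : ℂ) := by
      rw [← hermA', ← hermT', hAz, dotProduct_smul, smul_eq_mul]
    -- positivity facts
    have huv : u ≠ 0 ∨ v ≠ 0 := by
      obtain ⟨p, hp⟩ := Function.ne_iff.mp hz
      rcases (by
        by_contra hcon
        push_neg at hcon
        exact hp (Complex.ext hcon.1 hcon.2) : (z p).re ≠ 0 ∨ (z p).im ≠ 0) with h | h
      · exact Or.inl (fun h0 => h (congrFun h0 p))
      · exact Or.inr (fun h0 => h (congrFun h0 p))
    have c_u := core u
    have c_v := core v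
    have h1' : 0 < -rt := by
      rcases huv with h | h
      · have := (c_u.2 h).1; have := c_v.1.1; rw [hrt]; linarith
      · have := (c_v.2 h).1; have := c_u.1.1; rw [hrt]; linarith
    have h2' : 0 < rt - 2 * ra := by
      rcases huv with h | h
      · have := (c_u.2 h).2.1; have := c_v.1.2.1; rw [hrt, hra]; linarith
      · have := (c_v.2 h).2.1; have := c_u.1.2.1; rw [hrt, hra]; linarith
    have h3' : 0 < 2 * ra - 3 * rt := by
      rcases huv with h | h
      · have := (c_u.2 h).2.2; have := c_v.1.2.2; rw [hrt, hra]; linarith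
      · have := (c_v.2 h).2.2; have := c_u.1.2.2; rw [hrt, hra]; linarith
    have hrtne : rt ≠ 0 := by intro h; rw [h] at h1'; norm_num at h1'
    have hrtC : ((rt : ℝ) : ℂ) ≠ 0 := by exact_mod_cast hrtne
    have hμ : μ = (((ra / rt : ℝ)) : ℂ) := by
      rw [Complex.ofReal_div]
      field_simp
      linear_combination heq.symm
    obtain ⟨hlo, hhi⟩ := ratio_bounds ra rt h1' h2' h3'
    refine ⟨by rw [hμ]; exact Complex.ofReal_im _, ?_, ?_⟩
    · rw [hμ, Complex.ofReal_re]; exact hlo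
    · rw [hμ, Complex.ofReal_re]; exact hhi
  · -- real quadratic form part
    intro x hx
    obtain ⟨hp1, hp2, hp3⟩ := (core x).2 hx
    exact ratio_bounds _ _ hp1 hp2 hp3
end

section
/- Let α_1, α_2 ∈ (1,2), let n_1, n_2 ≥ 1 be integers, let c_x, c_y > 0, set N = n_1 n_2, let A = c_x (I_{n_2} ⊗ G_{n_1}^{(α_1)}) + c_y (G_{n_2}^{(α_2)} ⊗ I_{n_1}), let τ_1(A) = c_x (I_{n_2} ⊗ τ(G_{n_1}^{(α_1)})) + c_y (τ(G_{n_2}^{(α_2)}) ⊗ I_{n_1}), and let D be an N×N diagonal matrix with nonnegative diagonal entries. Then, with M = I_N - A + D and P = I_N - τ_1(A) + D, every eigenvalue λ of the preconditioned matrix P^{-1} M is real and uniformly bounded: 1/2 < λ < 3/2. -/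
open Matrix Kronecker

namespace S18

open Finset Matrix

variable {α : ℝ}

lemma g_zero : g α 0 = 1 := rfl
lemma g_succ (l : ℕ) : g α (l+1) = (1 - (α+1)/((l:ℝ)+1)) * g α l := rfl

lemma g_one : g α 1 = -α := by
  have := g_succ (α := α) 0
  simp at this
  rw [this, g_zero]; ring

lemma g_two : g α 2 = α * (α - 1) / 2 := by
  have := g_succ (α := α) 1
  rw [this, g_one]
  push_cast
  ring

lemma g_pos (h1 : 1 < α) (h2 : α < 2) : ∀ l, 2 ≤ l → 0 < g α l := by
  intro l hl
  induction l, hl using Nat.le_induction with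
  | base => rw [g_two]; nlinarith
  | succ l hl ih =>
    rw [g_succ]
    apply mul_pos _ ih
    have hl3 : (3:ℝ) ≤ (l:ℝ) + 1 := by
      have : (2:ℕ) ≤ l := hl
      push_cast
      have : (2:ℝ) ≤ (l:ℝ) := by exact_mod_cast this
      linarith
    have hpos : (0:ℝ) < (l:ℝ) + 1 := by linarith
    rw [sub_pos, div_lt_one hpos]
    linarith

lemma g_step_le (h1 : 1 < α) (h2 : α < 2) (l : ℕ) (hl : 2 ≤ l) : g α (l+1) ≤ g α l := by
  rw [g_succ]
  have hg := g_pos h1 h2 l hl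
  have hl2 : (2:ℝ) ≤ (l:ℝ) := by exact_mod_cast hl
  have hpos : (0:ℝ) < (l:ℝ) + 1 := by linarith
  nlinarith [div_nonneg (by linarith : (0:ℝ) ≤ α + 1) hpos.le,
    (div_le_one hpos).2 (by linarith : α + 1 ≤ (l:ℝ) + 1)]

noncomputable def gS (α : ℝ) (m : ℕ) : ℝ := ∑ l ∈ range (m+1), g α l

lemma gS_zero : gS α 0 = 1 := by simp [gS, g_zero]
lemma gS_succ (m : ℕ) : gS α (m+1) = gS α m + g α (m+1) := Finset.sum_range_succ _ _

lemma g_eq_gS (h1 : 1 < α) : ∀ m : ℕ, g α (m+1) = -(α/((m:ℝ)+1)) * gS α m := by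
  intro m
  induction m with
  | zero => rw [g_one, gS_zero]; norm_num
  | succ m ih =>
    have hm1 : ((m:ℝ)+1) ≠ 0 := by positivity
    have hm2 : ((m:ℝ)+2) ≠ 0 := by positivity
    have hα : α ≠ 0 := by linarith
    rw [g_succ, gS_succ, ih]
    push_cast
    field_simp
    ring

lemma gS_neg (h1 : 1 < α) (h2 : α < 2) : ∀ m, 1 ≤ m → gS α m < 0 := by
  intro m hm
  induction m, hm using Nat.le_induction with
  | base =>
    rw [show (1:ℕ) = 0 + 1 from rfl, gS_succ, gS_zero, g_one]; linarith
  | succ m hm ih =>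
    rw [gS_succ, g_eq_gS h1]
    have hm1 : (1:ℝ) ≤ (m:ℝ) := by exact_mod_cast hm
    have hpos : (0:ℝ) < (m:ℝ) + 1 := by linarith
    have : gS α m + -(α/((m:ℝ)+1)) * gS α m = gS α m * (((m:ℝ)+1-α)/((m:ℝ)+1)) := by
      field_simp; ring
    rw [this]
    apply mul_neg_of_neg_of_pos ih
    apply div_pos (by linarith) hpos

lemma gSymb_zero : gSymb α 0 = -(2*α) := by
  show 2 * g α 1 = -(2*α)
  rw [g_one]; ring

lemma gSymb_one : gSymb α 1 = 1 + α*(α-1)/2 := by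
  show g α 0 + g α 2 = _
  rw [g_zero, g_two]

lemma gSymb_two_add (d : ℕ) : gSymb α (d+2) = g α (d+3) := rfl

lemma gSymb_pos (h1 : 1 < α) (h2 : α < 2) : ∀ d, 1 ≤ d → 0 < gSymb α d := by
  intro d hd
  match d, hd with
  | 1, _ => rw [gSymb_one]; nlinarith
  | (k+2), _ => rw [gSymb_two_add]; exact g_pos h1 h2 _ (by omega)

lemma gSymb_dec (h1 : 1 < α) (h2 : α < 2) : ∀ d, 1 ≤ d → gSymb α (d+1) ≤ gSymb α d := by
  intro d hd
  match d, hd with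
  | 1, _ =>
    rw [gSymb_one, show (1+1:ℕ) = 0 + 2 from rfl, gSymb_two_add]
    have h3 : g α 3 ≤ g α 2 := g_step_le h1 h2 2 le_rfl
    rw [g_two] at h3
    nlinarith
  | (k+2), _ =>
    show g α ((k+1)+3) ≤ g α (k+3)
    rw [show (k+1+3 : ℕ) = (k+3)+1 from rfl]
    exact g_step_le h1 h2 _ (by omega)

lemma coeff_sum_eq (h1 : 1 < α) (h2 : α < 2) :
    ∀ m, 1 ≤ m → gSymb α 0 + 2 * ∑ d ∈ Icc 1 m, gSymb α d = 2 * gS α (m+1) := by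
  intro m hm
  induction m, hm using Nat.le_induction with
  | base =>
    have hg : gS α (1+1) = 1 + g α 1 + g α 2 := by
      rw [show (1+1:ℕ) = 0+1+1 from rfl, gS_succ, gS_succ, gS_zero]
    rw [show Icc 1 1 = {1} from rfl, Finset.sum_singleton, gSymb_zero, gSymb_one, hg,
      g_one, g_two]
    ring
  | succ m hm ih =>
    rw [Finset.sum_Icc_succ_top (by omega : 1 ≤ m+1), gS_succ]
    rw [show gSymb α (m+1) = g α (m+2) from by
      obtain ⟨k, rfl⟩ : ∃ k, m = k + 1 := ⟨m-1, by omega⟩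
      rfl]
    linarith [ih]

lemma coeff_sum_nonpos (h1 : 1 < α) (h2 : α < 2) (n : ℕ) (hn : 1 ≤ n) :
    gSymb α 0 + 2 * ∑ d ∈ Icc 1 (n-1), gSymb α d ≤ 0 := by
  rcases Nat.eq_or_lt_of_le hn with h | h
  · simp [← h, gSymb_zero]; linarith
  · have hm : 1 ≤ n - 1 := by omega
    rw [coeff_sum_eq h1 h2 (n-1) hm, show n - 1 + 1 = n from by omega]
    have := gS_neg h1 h2 n (by omega)
    linarith

-- quadratic form machinery (to append inside namespace S18)

def qF {ι : Type*} [Fintype ι] (R : Matrix ι ι ℝ) (x : ι → ℝ) : ℝ :=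
  ∑ i, ∑ j, R i j * (x i * x j)

lemma qF_add {ι : Type*} [Fintype ι] (R S : Matrix ι ι ℝ) (x : ι → ℝ) :
    qF (R + S) x = qF R x + qF S x := by
  simp [qF, add_mul, Finset.sum_add_distrib]

lemma qF_sub {ι : Type*} [Fintype ι] (R S : Matrix ι ι ℝ) (x : ι → ℝ) :
    qF (R - S) x = qF R x - qF S x := by
  simp [qF, sub_mul, Finset.sum_sub_distrib]

lemma qF_smul {ι : Type*} [Fintype ι] (c : ℝ) (R : Matrix ι ι ℝ) (x : ι → ℝ) :
    qF (c • R) x = c * qF R x := by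
  simp [qF, Finset.mul_sum, mul_assoc]

lemma qF_sum {ι κ : Type*} [Fintype ι] (s : Finset κ) (F : κ → Matrix ι ι ℝ) (x : ι → ℝ) :
    qF (∑ d ∈ s, F d) x = ∑ d ∈ s, qF (F d) x := by
  unfold qF
  simp only [Matrix.sum_apply, Finset.sum_mul]
  calc ∑ i, ∑ j, ∑ d ∈ s, F d i j * (x i * x j)
      = ∑ i, ∑ d ∈ s, ∑ j, F d i j * (x i * x j) :=
        Finset.sum_congr rfl fun i _ => Finset.sum_comm
    _ = ∑ d ∈ s, ∑ i, ∑ j, F d i j * (x i * x j) := Finset.sum_comm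

lemma qF_one {ι : Type*} [Fintype ι] [DecidableEq ι] (x : ι → ℝ) :
    qF (1 : Matrix ι ι ℝ) x = ∑ i, x i ^ 2 := by
  unfold qF
  simp only [Matrix.one_apply, ite_mul, one_mul, zero_mul]
  refine Finset.sum_congr rfl fun i _ => ?_
  rw [Finset.sum_ite_eq Finset.univ i (fun j => x i * x j)]
  simp [sq]

lemma qF_diagonal {ι : Type*} [Fintype ι] [DecidableEq ι] (f : ι → ℝ) (x : ι → ℝ) :
    qF (Matrix.diagonal f) x = ∑ i, f i * x i ^ 2 := by
  unfold qF
  refine Finset.sum_congr rfl fun i _ => ?_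
  rw [Finset.sum_eq_single i]
  · simp [Matrix.diagonal_apply, sq]
  · intro j _ hj
    simp [Matrix.diagonal_apply, Ne.symm hj]
  · simp

lemma qF_eq_dot {ι : Type*} [Fintype ι] (R : Matrix ι ι ℝ) (x : ι → ℝ) :
    qF R x = x ⬝ᵥ (R *ᵥ x) := by
  unfold qF
  simp only [dotProduct, Matrix.mulVec, Finset.mul_sum]
  refine Finset.sum_congr rfl fun i _ => Finset.sum_congr rfl fun j _ => ?_
  ring

-- single-level coefficient matrices
def aE (d : ℕ) (i j : ℕ) : ℝ := if ((i:ℤ) - (j:ℤ)).natAbs = d then 1 else 0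

def bE (n d : ℕ) (i j : ℕ) : ℝ :=
  (if i + j + 2 = d then 1 else 0) + (if 2*n = i + j + d then 1 else 0)

noncomputable def EM (α : ℝ) (n d : ℕ) (ε : ℝ) : Matrix (Fin n) (Fin n) ℝ :=
  Matrix.of fun i j : Fin n => aE d i j + ε * bE n d i j

lemma entryG {n : ℕ} (i j : Fin n) :
    gSymb α (((i:ℤ) - (j:ℤ)).natAbs)
      = (if i = j then gSymb α 0 else 0)
        + ∑ d ∈ Icc 1 (n-1), gSymb α d * aE d i j := by
  have hsum : ∑ d ∈ Icc 1 (n-1), gSymb α d * aE d i j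
      = if ((i:ℤ) - (j:ℤ)).natAbs ∈ Icc 1 (n-1) then gSymb α (((i:ℤ) - (j:ℤ)).natAbs) else 0 := by
    rw [← Finset.sum_ite_eq (Icc 1 (n-1)) (((i:ℤ) - (j:ℤ)).natAbs) (fun d => gSymb α d)]
    refine Finset.sum_congr rfl fun d _ => ?_
    unfold aE
    by_cases h : ((i:ℤ) - (j:ℤ)).natAbs = d
    · simp [h]
    · simp [h, Ne.symm h]
  rw [hsum]
  by_cases hij : i = j
  · subst hij
    simp
  · have h1 : (1:ℕ) ≤ ((i:ℤ) - (j:ℤ)).natAbs ∧ ((i:ℤ) - (j:ℤ)).natAbs ≤ n - 1 := by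
      have hi := i.isLt; have hj := j.isLt
      have : (i:ℕ) ≠ (j:ℕ) := fun h => hij (Fin.ext h)
      omega
    rw [if_neg hij, if_pos (Finset.mem_Icc.2 h1), zero_add]

lemma entryH {n : ℕ} (hn : 1 ≤ n) (i j : Fin n) :
    hankelMat (gSymb α) n i j
      = ∑ d ∈ Icc 1 (n-1), gSymb α d * bE n d i j := by
  have hi := i.isLt; have hj := j.isLt
  have expand : ∑ d ∈ Icc 1 (n-1), gSymb α d * bE n d i j
      = (∑ d ∈ Icc 1 (n-1), if (i:ℕ) + (j:ℕ) + 2 = d then gSymb α d else 0)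
        + (∑ d ∈ Icc 1 (n-1), if 2*n = (i:ℕ) + (j:ℕ) + d then gSymb α d else 0) := by
    rw [← Finset.sum_add_distrib]
    refine Finset.sum_congr rfl fun d _ => ?_
    unfold bE
    by_cases h1 : (i:ℕ) + (j:ℕ) + 2 = d <;> by_cases h2 : 2*n = (i:ℕ) + (j:ℕ) + d <;>
      simp [h1, h2] <;> ring
  rw [expand]
  show (if (i:ℕ) + (j:ℕ) + 2 ≤ n - 1 then gSymb α ((i:ℕ) + (j:ℕ) + 2)
      else if (i:ℕ) + (j:ℕ) + 2 ≤ n + 2 then 0 else gSymb α (2*n + 2 - ((i:ℕ) + (j:ℕ) + 2))) = _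
  by_cases hb1 : (i:ℕ) + (j:ℕ) + 2 ≤ n - 1
  · rw [if_pos hb1]
    have e1 : ∑ d ∈ Icc 1 (n-1), (if (i:ℕ) + (j:ℕ) + 2 = d then gSymb α d else 0)
        = gSymb α ((i:ℕ) + (j:ℕ) + 2) := by
      rw [Finset.sum_ite_eq (Icc 1 (n-1)) ((i:ℕ) + (j:ℕ) + 2) (fun d => gSymb α d)]
      rw [if_pos (Finset.mem_Icc.2 (by omega))]
    have e2 : ∑ d ∈ Icc 1 (n-1), (if 2*n = (i:ℕ) + (j:ℕ) + d then gSymb α d else 0) = 0 := by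
      apply Finset.sum_eq_zero
      intro d hd
      rw [Finset.mem_Icc] at hd
      rw [if_neg (by omega)]
    rw [e1, e2, add_zero]
  · rw [if_neg hb1]
    by_cases hb2 : (i:ℕ) + (j:ℕ) + 2 ≤ n + 2
    · rw [if_pos hb2]
      have e1 : ∑ d ∈ Icc 1 (n-1), (if (i:ℕ) + (j:ℕ) + 2 = d then gSymb α d else 0) = 0 := by
        apply Finset.sum_eq_zero
        intro d hd
        rw [Finset.mem_Icc] at hd
        rw [if_neg (by omega)]
      have e2 : ∑ d ∈ Icc 1 (n-1), (if 2*n = (i:ℕ) + (j:ℕ) + d then gSymb α d else 0) = 0 := by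
        apply Finset.sum_eq_zero
        intro d hd
        rw [Finset.mem_Icc] at hd
        rw [if_neg (by omega)]
      rw [e1, e2, add_zero]
    · rw [if_neg hb2]
      have e1 : ∑ d ∈ Icc 1 (n-1), (if (i:ℕ) + (j:ℕ) + 2 = d then gSymb α d else 0) = 0 := by
        apply Finset.sum_eq_zero
        intro d hd
        rw [Finset.mem_Icc] at hd
        rw [if_neg (by omega)]
      have e2 : ∑ d ∈ Icc 1 (n-1), (if 2*n = (i:ℕ) + (j:ℕ) + d then gSymb α d else 0)
          = gSymb α (2*n + 2 - ((i:ℕ) + (j:ℕ) + 2)) := by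
        rw [Finset.sum_eq_single (2*n + 2 - ((i:ℕ) + (j:ℕ) + 2))]
        · rw [if_pos (by omega)]
        · intro d hd hne
          rw [Finset.mem_Icc] at hd
          rw [if_neg (by omega)]
        · intro hmem
          exfalso
          apply hmem
          rw [Finset.mem_Icc]
          omega
      rw [e1, e2, zero_add]

lemma GH_decomp {n : ℕ} (hn : 1 ≤ n) (ε : ℝ) :
    Gmat α n + ε • hankelMat (gSymb α) n
      = gSymb α 0 • (1 : Matrix (Fin n) (Fin n) ℝ)
        + ∑ d ∈ Icc 1 (n-1), gSymb α d • EM α n d ε := by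
  ext i j
  simp only [Matrix.add_apply, Matrix.smul_apply, Matrix.sum_apply, Matrix.one_apply,
    smul_eq_mul]
  have hG : Gmat α n i j = gSymb α (((i:ℤ) - (j:ℤ)).natAbs) := rfl
  rw [hG, entryG i j, entryH hn i j]
  have : ∀ d ∈ Icc 1 (n-1), gSymb α d * EM α n d ε i j
      = gSymb α d * aE d i j + ε * (gSymb α d * bE n d i j) := by
    intro d _
    show gSymb α d * (aE d i j + ε * bE n d i j) = _
    ring
  rw [Finset.sum_congr rfl this, Finset.sum_add_distrib, ← Finset.mul_sum]
  by_cases h : i = j <;> simp [h] <;> ring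

def aB (d i j : ℕ) : ℝ := if 1 ≤ ((i:ℤ)-(j:ℤ)).natAbs ∧ ((i:ℤ)-(j:ℤ)).natAbs ≤ d then 1 else 0
def bB1 (d i j : ℕ) : ℝ := if i + j + 2 ≤ d then 1 else 0
def bB2 (n d i j : ℕ) : ℝ := if 2*n ≤ i + j + d then 1 else 0

lemma sum_aE (d i j : ℕ) : ∑ e ∈ Icc 1 d, aE e i j = aB d i j := by
  unfold aE aB
  rw [Finset.sum_ite_eq (Icc 1 d) (((i:ℤ)-(j:ℤ)).natAbs) (fun _ => (1:ℝ))]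
  by_cases h : 1 ≤ ((i:ℤ)-(j:ℤ)).natAbs ∧ ((i:ℤ)-(j:ℤ)).natAbs ≤ d
  · rw [if_pos (Finset.mem_Icc.2 h), if_pos h]
  · rw [if_neg (fun hm => h (Finset.mem_Icc.1 hm)), if_neg h]

lemma sum_bE (n d : ℕ) (hn : 1 ≤ n) (hd2 : d ≤ n - 1) (i j : ℕ) (hi : i < n) (hj : j < n) :
    ∑ e ∈ Icc 1 d, bE n e i j = bB1 d i j + bB2 n d i j := by
  unfold bE
  rw [Finset.sum_add_distrib]
  congr 1
  · unfold bB1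
    rw [Finset.sum_ite_eq (Icc 1 d) (i + j + 2) (fun _ => (1:ℝ))]
    by_cases h : i + j + 2 ≤ d
    · rw [if_pos (Finset.mem_Icc.2 (by omega)), if_pos h]
    · rw [if_neg (fun hm => by have := Finset.mem_Icc.1 hm; omega), if_neg h]
  · unfold bB2
    by_cases h : 2*n ≤ i + j + d
    · rw [if_pos h, Finset.sum_eq_single (2*n - (i+j))]
      · rw [if_pos (by omega)]
      · intro e he hne
        rw [Finset.mem_Icc] at he
        rw [if_neg (by omega)]
      · intro hmem
        exact absurd (Finset.mem_Icc.2 (by omega)) hmem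
    · rw [if_neg h]
      apply Finset.sum_eq_zero
      intro e he
      rw [Finset.mem_Icc] at he
      rw [if_neg (by omega)]

lemma coeff_abs_le (n d : ℕ) (hn : 1 ≤ n) (hd1 : 1 ≤ d) (hd2 : d ≤ n - 1) (ε : ℝ)
    (hε : ε = 1 ∨ ε = -3) (i j : ℕ) (hi : i < n) (hj : j < n) (hij : i ≠ j) :
    |aB d i j + ε * (bB1 d i j + bB2 n d i j)| ≤ aB d i j + (bB1 d i j + bB2 n d i j) := by
  unfold aB bB1 bB2
  by_cases h2 : i + j + 2 ≤ d
  · have h3 : ¬ (2*n ≤ i + j + d) := by omega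
    have h1 : 1 ≤ ((i:ℤ)-(j:ℤ)).natAbs ∧ ((i:ℤ)-(j:ℤ)).natAbs ≤ d := by omega
    rcases hε with rfl | rfl <;> simp [h1, h2, h3] <;> norm_num
  · by_cases h3 : 2*n ≤ i + j + d
    · have h1 : 1 ≤ ((i:ℤ)-(j:ℤ)).natAbs ∧ ((i:ℤ)-(j:ℤ)).natAbs ≤ d := by omega
      rcases hε with rfl | rfl <;> simp [h1, h2, h3] <;> norm_num
    · by_cases h1 : 1 ≤ ((i:ℤ)-(j:ℤ)).natAbs ∧ ((i:ℤ)-(j:ℤ)).natAbs ≤ d <;>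
        rcases hε with rfl | rfl <;> simp [h1, h2, h3]

lemma coeff_diag_le (n d : ℕ) (ε : ℝ) (hε : ε = 1 ∨ ε = -3) (i j : ℕ) :
    ε * (bB1 d i j + bB2 n d i j) ≤ bB1 d i j + bB2 n d i j := by
  have hb1 : (0:ℝ) ≤ bB1 d i j := by unfold bB1; positivity
  have hb2 : (0:ℝ) ≤ bB2 n d i j := by unfold bB2; positivity
  rcases hε with rfl | rfl <;> nlinarith

lemma aB_diag (d i : ℕ) : aB d i i = 0 := by
  unfold aB
  rw [if_neg (by omega)]

lemma pointwise_le (n d : ℕ) (hn : 1 ≤ n) (hd1 : 1 ≤ d) (hd2 : d ≤ n - 1) (ε : ℝ)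
    (hε : ε = 1 ∨ ε = -3) (i j : ℕ) (hi : i < n) (hj : j < n) (x : ℕ → ℝ) :
    (aB d i j + ε * (bB1 d i j + bB2 n d i j)) * (x i * x j)
      ≤ (aB d i j + (bB1 d i j + bB2 n d i j)) * ((x i^2 + x j^2)/2) := by
  by_cases hij : i = j
  · subst hij
    have hc := coeff_diag_le n d ε hε i i
    rw [aB_diag, zero_add, zero_add]
    have h1 : x i * x i = (x i^2 + x i^2)/2 := by ring
    rw [h1]
    apply mul_le_mul_of_nonneg_right hc
    positivity
  · have habs := coeff_abs_le n d hn hd1 hd2 ε hε i j hi hj hij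
    have hm : 0 ≤ aB d i j + (bB1 d i j + bB2 n d i j) := by
      have : |aB d i j + ε * (bB1 d i j + bB2 n d i j)| ≥ 0 := abs_nonneg _
      linarith
    calc (aB d i j + ε * (bB1 d i j + bB2 n d i j)) * (x i * x j)
        ≤ |(aB d i j + ε * (bB1 d i j + bB2 n d i j)) * (x i * x j)| := le_abs_self _
      _ = |aB d i j + ε * (bB1 d i j + bB2 n d i j)| * |x i * x j| := abs_mul _ _
      _ ≤ (aB d i j + (bB1 d i j + bB2 n d i j)) * ((x i^2 + x j^2)/2) := by
          apply mul_le_mul habs _ (abs_nonneg _) hm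
          rw [abs_mul]
          nlinarith [sq_abs (x i), sq_abs (x j), sq_nonneg (|x i| - |x j|),
            abs_nonneg (x i), abs_nonneg (x j)]

lemma card_ind (n : ℕ) (P : ℕ → Prop) [DecidablePred P] (a b : ℕ)
    (h : ∀ j, j < n → P j → a ≤ j ∧ j < b) :
    ∑ j ∈ range n, (if P j then (1:ℝ) else 0) ≤ (b - a : ℕ) := by
  rw [Finset.sum_boole]
  have hsub : (range n).filter P ⊆ Finset.Ico a b := by
    intro j hj
    rw [Finset.mem_filter, Finset.mem_range] at hj
    rw [Finset.mem_Ico]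
    exact h j hj.1 hj.2
  have := Finset.card_le_card hsub
  rw [Nat.card_Ico] at this
  exact_mod_cast this

lemma aB_split (d i j : ℕ) :
    aB d i j = (if j < i ∧ i ≤ j + d then (1:ℝ) else 0) + (if i < j ∧ j ≤ i + d then 1 else 0) := by
  unfold aB
  by_cases h1 : j < i ∧ i ≤ j + d
  · rw [if_pos h1, if_pos (by omega), if_neg (by omega)]; norm_num
  · by_cases h2 : i < j ∧ j ≤ i + d
    · rw [if_pos (by omega), if_neg h1, if_pos h2]; norm_num
    · rw [if_neg (by omega), if_neg h1, if_neg h2]; norm_num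

lemma row_bound (n d : ℕ) (hn : 1 ≤ n) (hd1 : 1 ≤ d) (hd2 : d ≤ n - 1) (i : ℕ) (hi : i < n) :
    ∑ j : Fin n, (aB d i (j:ℕ) + (bB1 d i (j:ℕ) + bB2 n d i (j:ℕ))) ≤ 2*(d:ℝ) := by
  have hconv : ∑ j : Fin n, (aB d i (j:ℕ) + (bB1 d i (j:ℕ) + bB2 n d i (j:ℕ)))
      = ∑ j ∈ range n, (aB d i j + (bB1 d i j + bB2 n d i j)) :=
    Fin.sum_univ_eq_sum_range (fun j => aB d i j + (bB1 d i j + bB2 n d i j)) n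
  rw [hconv]
  have hsplit : ∑ j ∈ range n, (aB d i j + (bB1 d i j + bB2 n d i j))
      = (∑ j ∈ range n, (if j < i ∧ i ≤ j + d then (1:ℝ) else 0))
      + (∑ j ∈ range n, (if i < j ∧ j ≤ i + d then (1:ℝ) else 0))
      + (∑ j ∈ range n, bB1 d i j) + (∑ j ∈ range n, bB2 n d i j) := by
    rw [← Finset.sum_add_distrib, ← Finset.sum_add_distrib, ← Finset.sum_add_distrib]
    refine Finset.sum_congr rfl fun j _ => ?_
    rw [aB_split]; ring
  rw [hsplit]
  have c1 : ∑ j ∈ range n, (if j < i ∧ i ≤ j + d then (1:ℝ) else 0) ≤ (i - (i - d) : ℕ) :=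
    card_ind n _ (i - d) i (by omega)
  have c2 : ∑ j ∈ range n, (if i < j ∧ j ≤ i + d then (1:ℝ) else 0) ≤ (n - (i+1) : ℕ) :=
    card_ind n _ (i+1) n (by omega)
  have c2' : ∑ j ∈ range n, (if i < j ∧ j ≤ i + d then (1:ℝ) else 0) ≤ ((i+d+1) - (i+1) : ℕ) :=
    card_ind n _ (i+1) (i+d+1) (by omega)
  have c3 : ∑ j ∈ range n, bB1 d i j ≤ ((d-1-i) - 0 : ℕ) := by
    unfold bB1; exact card_ind n _ 0 (d-1-i) (by omega)
  have c4 : ∑ j ∈ range n, bB2 n d i j ≤ (n - (2*n-d-i) : ℕ) := by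
    unfold bB2; exact card_ind n _ (2*n-d-i) n (by omega)
  -- combine: (c1 + c3) ≤ d and (c2 + c4) ≤ d
  have h13 : (i - (i - d) : ℕ) + ((d-1-i) - 0 : ℕ) ≤ d := by omega
  have h24 : ((n - (i+1) : ℕ) ≤ (n-1-i:ℕ)) := by omega
  have hfinal : ((i - (i - d) : ℕ):ℝ) + ((d-1-i) - 0 : ℕ) + (min ((n - (i+1) : ℕ)) (((i+d+1) - (i+1) : ℕ)) : ℕ)
      + ((n - (2*n-d-i) : ℕ)) ≤ 2*(d:ℝ) := by
    have : (i - (i - d) : ℕ) + ((d-1-i) - 0 : ℕ) + (min ((n - (i+1) : ℕ)) (((i+d+1) - (i+1) : ℕ)))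
        + ((n - (2*n-d-i) : ℕ)) ≤ 2*d := by omega
    exact_mod_cast this
  have hc2min : ∑ j ∈ range n, (if i < j ∧ j ≤ i + d then (1:ℝ) else 0)
      ≤ (min ((n - (i+1) : ℕ)) (((i+d+1) - (i+1) : ℕ)) : ℕ) := by
    rcases min_cases ((n - (i+1) : ℕ)) (((i+d+1) - (i+1) : ℕ)) with ⟨hm, _⟩ | ⟨hm, _⟩ <;>
      rw [hm]
    · exact c2
    · exact c2'
  linarith

lemma coeff_symm (n d : ℕ) (i j : ℕ) :
    aB d i j + (bB1 d i j + bB2 n d i j) = aB d j i + (bB1 d j i + bB2 n d j i) := by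
  unfold aB bB1 bB2
  have h1 : ((i:ℤ)-(j:ℤ)).natAbs = ((j:ℤ)-(i:ℤ)).natAbs := by omega
  rw [h1, show i + j = j + i from by omega]

lemma W_bound {α : ℝ} (n d : ℕ) (hn : 1 ≤ n) (hd1 : 1 ≤ d) (hd2 : d ≤ n - 1) (ε : ℝ)
    (hε : ε = 1 ∨ ε = -3) (x : Fin n → ℝ) :
    ∑ e ∈ Icc 1 d, qF (EM α n e ε) x ≤ 2*(d:ℝ)*(∑ i, x i^2) := by
  rw [← qF_sum]
  have hentry : ∀ i j : Fin n, (∑ e ∈ Icc 1 d, EM α n e ε) i j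
      = aB d (i:ℕ) (j:ℕ) + ε * (bB1 d (i:ℕ) (j:ℕ) + bB2 n d (i:ℕ) (j:ℕ)) := by
    intro i j
    rw [Matrix.sum_apply]
    have : ∀ e ∈ Icc 1 d, EM α n e ε i j = aE e (i:ℕ) (j:ℕ) + ε * bE n e (i:ℕ) (j:ℕ) :=
      fun e _ => rfl
    rw [Finset.sum_congr rfl this, Finset.sum_add_distrib, sum_aE, ← Finset.mul_sum,
      sum_bE n d hn (by omega) _ _ i.isLt j.isLt]
  unfold qF
  rw [Finset.sum_congr rfl (fun i _ => Finset.sum_congr rfl (fun j _ => by rw [hentry i j]))]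
  have step1 : ∑ i : Fin n, ∑ j : Fin n,
      (aB d (i:ℕ) (j:ℕ) + ε * (bB1 d (i:ℕ) (j:ℕ) + bB2 n d (i:ℕ) (j:ℕ))) * (x i * x j)
      ≤ ∑ i : Fin n, ∑ j : Fin n,
      (aB d (i:ℕ) (j:ℕ) + (bB1 d (i:ℕ) (j:ℕ) + bB2 n d (i:ℕ) (j:ℕ))) * ((x i^2 + x j^2)/2) := by
    refine Finset.sum_le_sum fun i _ => Finset.sum_le_sum fun j _ => ?_
    have h := pointwise_le n d hn hd1 (by omega) ε hε (i:ℕ) (j:ℕ) i.isLt j.isLt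
      (fun k => if h : k < n then x ⟨k, h⟩ else 0)
    simpa [i.isLt, j.isLt] using h
  refine le_trans step1 ?_
  -- symmetrize
  have hsym : ∑ i : Fin n, ∑ j : Fin n,
      (aB d (i:ℕ) (j:ℕ) + (bB1 d (i:ℕ) (j:ℕ) + bB2 n d (i:ℕ) (j:ℕ))) * ((x i^2 + x j^2)/2)
      = ∑ i : Fin n, (∑ j : Fin n,
      (aB d (i:ℕ) (j:ℕ) + (bB1 d (i:ℕ) (j:ℕ) + bB2 n d (i:ℕ) (j:ℕ)))) * (x i^2) := by
    have expand : ∀ i j : Fin n,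
        (aB d (i:ℕ) (j:ℕ) + (bB1 d (i:ℕ) (j:ℕ) + bB2 n d (i:ℕ) (j:ℕ))) * ((x i^2 + x j^2)/2)
        = (aB d (i:ℕ) (j:ℕ) + (bB1 d (i:ℕ) (j:ℕ) + bB2 n d (i:ℕ) (j:ℕ))) * (x i^2)/2
          + (aB d (i:ℕ) (j:ℕ) + (bB1 d (i:ℕ) (j:ℕ) + bB2 n d (i:ℕ) (j:ℕ))) * (x j^2)/2 := by
      intro i j; ring
    rw [Finset.sum_congr rfl (fun i _ => Finset.sum_congr rfl (fun j _ => expand i j))]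
    rw [Finset.sum_congr rfl (fun i _ => Finset.sum_add_distrib), Finset.sum_add_distrib]
    have swap : ∑ i : Fin n, ∑ j : Fin n,
        (aB d (i:ℕ) (j:ℕ) + (bB1 d (i:ℕ) (j:ℕ) + bB2 n d (i:ℕ) (j:ℕ))) * (x j^2)/2
        = ∑ i : Fin n, ∑ j : Fin n,
        (aB d (i:ℕ) (j:ℕ) + (bB1 d (i:ℕ) (j:ℕ) + bB2 n d (i:ℕ) (j:ℕ))) * (x i^2)/2 := by
      rw [Finset.sum_comm]
      refine Finset.sum_congr rfl fun i _ => Finset.sum_congr rfl fun j _ => ?_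
      rw [coeff_symm]
    rw [swap, ← Finset.sum_add_distrib]
    refine Finset.sum_congr rfl fun i _ => ?_
    rw [← Finset.sum_add_distrib, Finset.sum_mul]
    refine Finset.sum_congr rfl fun j _ => ?_
    ring
  rw [hsym]
  have : ∑ i : Fin n, (∑ j : Fin n,
      (aB d (i:ℕ) (j:ℕ) + (bB1 d (i:ℕ) (j:ℕ) + bB2 n d (i:ℕ) (j:ℕ)))) * (x i^2)
      ≤ ∑ i : Fin n, 2*(d:ℝ) * (x i^2) := by
    refine Finset.sum_le_sum fun i _ => ?_
    apply mul_le_mul_of_nonneg_right _ (sq_nonneg _)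
    exact row_bound n d hn hd1 hd2 (i:ℕ) i.isLt
  refine le_trans this ?_
  rw [← Finset.mul_sum]

lemma abel_aux (t w : ℕ → ℝ) (c : ℝ) : ∀ m : ℕ,
    (∀ d, 1 ≤ d → d ≤ m → 0 ≤ t d) →
    (∀ d, 1 ≤ d → d + 1 ≤ m → t (d+1) ≤ t d) →
    (∀ d, 1 ≤ d → d ≤ m → ∑ e ∈ Icc 1 d, w e ≤ 2*(d:ℝ)*c) →
    ∑ d ∈ Icc 1 m, t d * w d + t m * (2*(m:ℝ)*c - ∑ e ∈ Icc 1 m, w e)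
      ≤ 2*(∑ d ∈ Icc 1 m, t d)*c := by
  intro m
  induction m with
  | zero => intro _ _ _; simp
  | succ m ih =>
    intro hpos hdec hW
    have ih' := ih (fun d h1 h2 => hpos d h1 (by omega)) (fun d h1 h2 => hdec d h1 (by omega))
      (fun d h1 h2 => hW d h1 (by omega))
    rw [Finset.sum_Icc_succ_top (by omega : 1 ≤ m+1),
        Finset.sum_Icc_succ_top (by omega : 1 ≤ m+1),
        Finset.sum_Icc_succ_top (by omega : 1 ≤ m+1)]
    rcases Nat.eq_zero_or_pos m with rfl | hm
    · simp
      have := hpos 1 le_rfl le_rfl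
      nlinarith
    · have hWm : ∑ e ∈ Icc 1 m, w e ≤ 2*(m:ℝ)*c := hW m hm (by omega)
      have hde : t (m+1) ≤ t m := hdec m hm le_rfl
      have hp1 : 0 ≤ t (m+1) := hpos (m+1) (by omega) le_rfl
      have key : t (m+1) * (2*((m:ℝ)+1)*c - (∑ e ∈ Icc 1 m, w e + w (m+1)))
          = t (m+1) * (2*(m:ℝ)*c - ∑ e ∈ Icc 1 m, w e) + 2*c*t (m+1) - t (m+1) * w (m+1) := by
        ring
      have hmono : t (m+1) * (2*(m:ℝ)*c - ∑ e ∈ Icc 1 m, w e)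
          ≤ t m * (2*(m:ℝ)*c - ∑ e ∈ Icc 1 m, w e) :=
        mul_le_mul_of_nonneg_right hde (by linarith)
      push_cast
      push_cast at key ih'
      nlinarith [ih', hmono, key]

lemma abel_bound (t w : ℕ → ℝ) (c : ℝ) (m : ℕ)
    (hpos : ∀ d, 1 ≤ d → d ≤ m → 0 ≤ t d)
    (hdec : ∀ d, 1 ≤ d → d + 1 ≤ m → t (d+1) ≤ t d)
    (hW : ∀ d, 1 ≤ d → d ≤ m → ∑ e ∈ Icc 1 d, w e ≤ 2*(d:ℝ)*c) :
    ∑ d ∈ Icc 1 m, t d * w d ≤ 2*(∑ d ∈ Icc 1 m, t d)*c := by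
  have h := abel_aux t w c m hpos hdec hW
  rcases Nat.eq_zero_or_pos m with rfl | hm
  · simpa using h
  · have h1 : 0 ≤ t m * (2*(m:ℝ)*c - ∑ e ∈ Icc 1 m, w e) :=
      mul_nonneg (hpos m hm le_rfl) (by linarith [hW m hm le_rfl])
    linarith

theorem oneD {α : ℝ} (h1 : 1 < α) (h2 : α < 2) {n : ℕ} (hn : 1 ≤ n) (ε : ℝ)
    (hε : ε = 1 ∨ ε = -3) (x : Fin n → ℝ) :
    qF (Gmat α n + ε • hankelMat (gSymb α) n) x ≤ 0 := by
  rw [GH_decomp hn ε, qF_add, qF_smul, qF_one, qF_sum]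
  rw [Finset.sum_congr rfl (fun d _ => qF_smul (gSymb α d) (EM α n d ε) x)]
  have habel : ∑ d ∈ Icc 1 (n-1), gSymb α d * qF (EM α n d ε) x
      ≤ 2*(∑ d ∈ Icc 1 (n-1), gSymb α d)*(∑ i, x i^2) := by
    apply abel_bound
    · exact fun d hd1 _ => (gSymb_pos h1 h2 d hd1).le
    · exact fun d hd1 _ => gSymb_dec h1 h2 d hd1
    · exact fun d hd1 hd2 => W_bound n d hn hd1 (by omega) ε hε x
  have hx : 0 ≤ ∑ i, x i^2 := Finset.sum_nonneg fun i _ => sq_nonneg _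
  have hcoeff := coeff_sum_nonpos h1 h2 n hn
  nlinarith [habel, hx, hcoeff]

section Kron
open Kronecker

variable {n₁ n₂ : ℕ}

lemma qF_kron_left (C : Matrix (Fin n₁) (Fin n₁) ℝ) (u : Fin n₂ × Fin n₁ → ℝ) :
    qF ((1 : Matrix (Fin n₂) (Fin n₂) ℝ) ⊗ₖ C) u = ∑ r : Fin n₂, qF C (fun i => u (r, i)) := by
  unfold qF
  rw [Fintype.sum_prod_type]
  refine Finset.sum_congr rfl fun r _ => ?_
  refine Finset.sum_congr rfl fun i _ => ?_
  rw [Fintype.sum_prod_type, Finset.sum_comm]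
  refine Finset.sum_congr rfl fun j _ => ?_
  have key : ∀ s : Fin n₂, ((1 : Matrix (Fin n₂) (Fin n₂) ℝ) ⊗ₖ C) (r,i) (s,j) * (u (r,i) * u (s,j))
      = if r = s then C i j * (u (r,i) * u (s,j)) else 0 := by
    intro s
    rw [Matrix.kroneckerMap_apply, Matrix.one_apply]
    by_cases h : r = s <;> simp [h]
  rw [Finset.sum_congr rfl (fun s _ => key s),
    Finset.sum_ite_eq Finset.univ r (fun s => C i j * (u (r,i) * u (s,j)))]
  simp

lemma qF_kron_right (C : Matrix (Fin n₂) (Fin n₂) ℝ) (u : Fin n₂ × Fin n₁ → ℝ) :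
    qF (C ⊗ₖ (1 : Matrix (Fin n₁) (Fin n₁) ℝ)) u = ∑ i : Fin n₁, qF C (fun r => u (r, i)) := by
  unfold qF
  rw [Fintype.sum_prod_type]
  have inner : ∀ r : Fin n₂, ∀ i : Fin n₁,
      ∑ q : Fin n₂ × Fin n₁, (C ⊗ₖ (1 : Matrix (Fin n₁) (Fin n₁) ℝ)) (r,i) q * (u (r,i) * u q)
      = ∑ s : Fin n₂, C r s * (u (r,i) * u (s,i)) := by
    intro r i
    rw [Fintype.sum_prod_type]
    refine Finset.sum_congr rfl fun s _ => ?_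
    have key : ∀ j : Fin n₁, (C ⊗ₖ (1 : Matrix (Fin n₁) (Fin n₁) ℝ)) (r,i) (s,j) * (u (r,i) * u (s,j))
        = if i = j then C r s * (u (r,i) * u (s,j)) else 0 := by
      intro j
      rw [Matrix.kroneckerMap_apply, Matrix.one_apply]
      by_cases h : i = j <;> simp [h]
    rw [Finset.sum_congr rfl (fun j _ => key j),
      Finset.sum_ite_eq Finset.univ i (fun j => C r s * (u (r,i) * u (s,j)))]
    simp
  rw [Finset.sum_congr rfl (fun r _ => Finset.sum_congr rfl (fun i _ => inner r i)),
    Finset.sum_comm]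

theorem bigQ_nonpos {α₁ α₂ : ℝ} (h11 : 1 < α₁) (h12 : α₁ < 2) (h21 : 1 < α₂) (h22 : α₂ < 2)
    {n₁ n₂ : ℕ} (hn₁ : 1 ≤ n₁) (hn₂ : 1 ≤ n₂) (cx cy : ℝ) (hcx : 0 ≤ cx) (hcy : 0 ≤ cy)
    (ε : ℝ) (hε : ε = 1 ∨ ε = -3) (u : Fin n₂ × Fin n₁ → ℝ) :
    qF (cx • ((1 : Matrix (Fin n₂) (Fin n₂) ℝ) ⊗ₖ (Gmat α₁ n₁ + ε • hankelMat (gSymb α₁) n₁)) +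
        cy • ((Gmat α₂ n₂ + ε • hankelMat (gSymb α₂) n₂) ⊗ₖ (1 : Matrix (Fin n₁) (Fin n₁) ℝ))) u
      ≤ 0 := by
  rw [qF_add, qF_smul, qF_smul, qF_kron_left, qF_kron_right]
  have t1 : ∑ r : Fin n₂, qF (Gmat α₁ n₁ + ε • hankelMat (gSymb α₁) n₁) (fun i => u (r, i)) ≤ 0 :=
    Finset.sum_nonpos fun r _ => oneD h11 h12 hn₁ ε hε _
  have t2 : ∑ i : Fin n₁, qF (Gmat α₂ n₂ + ε • hankelMat (gSymb α₂) n₂) (fun r => u (r, i)) ≤ 0 :=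
    Finset.sum_nonpos fun i _ => oneD h21 h22 hn₂ ε hε _
  nlinarith [mul_nonneg hcx (neg_nonneg.2 t1), mul_nonneg hcy (neg_nonneg.2 t2)]

end Kron

lemma Gmat_symm {α : ℝ} {n : ℕ} (i j : Fin n) : Gmat α n i j = Gmat α n j i := by
  show gSymb α (((i:ℤ)-(j:ℤ)).natAbs) = gSymb α (((j:ℤ)-(i:ℤ)).natAbs)
  congr 1
  omega

lemma hankel_symm (t : ℕ → ℝ) {n : ℕ} (i j : Fin n) :
    hankelMat t n i j = hankelMat t n j i := by
  show (if (i:ℕ)+(j:ℕ)+2 ≤ n - 1 then t ((i:ℕ)+(j:ℕ)+2)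
      else if (i:ℕ)+(j:ℕ)+2 ≤ n + 2 then 0 else t (2*n+2 - ((i:ℕ)+(j:ℕ)+2)))
    = (if (j:ℕ)+(i:ℕ)+2 ≤ n - 1 then t ((j:ℕ)+(i:ℕ)+2)
      else if (j:ℕ)+(i:ℕ)+2 ≤ n + 2 then 0 else t (2*n+2 - ((j:ℕ)+(i:ℕ)+2)))
  rw [Nat.add_comm (i:ℕ) (j:ℕ)]

lemma herm {ι : Type*} [Fintype ι] (R : Matrix ι ι ℝ) (hR : ∀ p q, R p q = R q p) (z : ι → ℂ) :
    ∑ p, (starRingEnd ℂ) (z p) * ((R.map (fun a : ℝ => (a:ℂ))) *ᵥ z) p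
      = ((qF R (fun p => (z p).re) + qF R (fun p => (z p).im) : ℝ) : ℂ) := by
  have hexp : ∀ p, ((R.map (fun a : ℝ => (a:ℂ))) *ᵥ z) p = ∑ q, ((R p q : ℝ):ℂ) * z q := by
    intro p
    simp [Matrix.mulVec, dotProduct, Matrix.map_apply]
  have hmain : ∑ p, (starRingEnd ℂ) (z p) * ((R.map (fun a : ℝ => (a:ℂ))) *ᵥ z) p
      = ∑ p, ∑ q, ((R p q : ℝ):ℂ) * ((starRingEnd ℂ) (z p) * z q) := by
    refine Finset.sum_congr rfl fun p _ => ?_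
    rw [hexp p, Finset.mul_sum]
    refine Finset.sum_congr rfl fun q _ => ?_
    ring
  rw [hmain]
  apply Complex.ext
  · rw [Complex.re_sum]
    rw [Finset.sum_congr rfl (fun p (_ : p ∈ Finset.univ) => Complex.re_sum Finset.univ _)]
    rw [Complex.ofReal_re]
    unfold qF
    rw [← Finset.sum_add_distrib]
    refine Finset.sum_congr rfl fun p _ => ?_
    rw [← Finset.sum_add_distrib]
    refine Finset.sum_congr rfl fun q _ => ?_
    simp [Complex.mul_re, Complex.mul_im]
    ring
  · rw [Complex.im_sum]
    rw [Finset.sum_congr rfl (fun p (_ : p ∈ Finset.univ) => Complex.im_sum Finset.univ _)]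
    rw [Complex.ofReal_im]
    have hsimp : ∀ p q : ι, (((R p q : ℝ):ℂ) * ((starRingEnd ℂ) (z p) * z q)).im
        = R p q * ((z p).re * (z q).im) - R p q * ((z p).im * (z q).re) := by
      intro p q
      simp [Complex.mul_re, Complex.mul_im]
      ring
    rw [Finset.sum_congr rfl (fun p (_ : p ∈ Finset.univ) =>
      Finset.sum_congr rfl (fun q (_ : q ∈ Finset.univ) => hsimp p q))]
    rw [Finset.sum_congr rfl (fun p (_ : p ∈ Finset.univ) => Finset.sum_sub_distrib _ _),
      Finset.sum_sub_distrib]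
    have : ∑ p, ∑ q, R p q * ((z p).re * (z q).im)
        = ∑ p, ∑ q, R p q * ((z p).im * (z q).re) := by
      rw [Finset.sum_comm]
      refine Finset.sum_congr rfl fun p _ => Finset.sum_congr rfl fun q _ => ?_
      rw [hR q p]
      ring
    rw [this, sub_self]

end S18

open Matrix Kronecker

theorem stmt18 (α₁ α₂ : ℝ) (hα₁ : 1 < α₁ ∧ α₁ < 2) (hα₂ : 1 < α₂ ∧ α₂ < 2)
    (n₁ n₂ : ℕ) (hn₁ : 1 ≤ n₁) (hn₂ : 1 ≤ n₂) (cx cy : ℝ) (hcx : 0 < cx) (hcy : 0 < cy)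
    (d : Fin n₂ × Fin n₁ → ℝ) (hd : ∀ i, 0 ≤ d i)
    (M P : Matrix (Fin n₂ × Fin n₁) (Fin n₂ × Fin n₁) ℝ)
    (hM : M = 1 - Amat α₁ α₂ n₁ n₂ cx cy + Matrix.diagonal d)
    (hP : P = 1 - tau1A α₁ α₂ n₁ n₂ cx cy + Matrix.diagonal d) :
    ∀ (μ : ℂ) (z : Fin n₂ × Fin n₁ → ℂ), z ≠ 0 →
      ((P⁻¹ * M).map (fun a : ℝ => (a : ℂ))) *ᵥ z = μ • z →
      μ.im = 0 ∧ 1 / 2 < μ.re ∧ μ.re < 3 / 2 := by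
  obtain ⟨h11, h12⟩ := hα₁
  obtain ⟨h21, h22⟩ := hα₂
  intro μ z hz heq
  have htau1 : tauMat (gSymb α₁) n₁ = Gmat α₁ n₁ - hankelMat (gSymb α₁) n₁ := rfl
  have htau2 : tauMat (gSymb α₂) n₂ = Gmat α₂ n₂ - hankelMat (gSymb α₂) n₂ := rfl
  -- matrix identities
  have h2MP : (2:ℝ) • M - P
      = (1 : Matrix (Fin n₂ × Fin n₁) (Fin n₂ × Fin n₁) ℝ) + Matrix.diagonal d
        - (cx • ((1 : Matrix (Fin n₂) (Fin n₂) ℝ) ⊗ₖ (Gmat α₁ n₁ + (1:ℝ) • hankelMat (gSymb α₁) n₁))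
          + cy • ((Gmat α₂ n₂ + (1:ℝ) • hankelMat (gSymb α₂) n₂) ⊗ₖ (1 : Matrix (Fin n₁) (Fin n₁) ℝ))) := by
    rw [hM, hP]
    unfold Amat tau1A
    rw [htau1, htau2]
    ext ⟨r,i⟩ ⟨s,j⟩
    simp only [Matrix.sub_apply, Matrix.add_apply, Matrix.smul_apply, Matrix.one_apply,
      Matrix.diagonal_apply, Matrix.kroneckerMap_apply, smul_eq_mul]
    ring
  have h3PM : (3:ℝ) • P - (2:ℝ) • M
      = (1 : Matrix (Fin n₂ × Fin n₁) (Fin n₂ × Fin n₁) ℝ) + Matrix.diagonal d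
        - (cx • ((1 : Matrix (Fin n₂) (Fin n₂) ℝ) ⊗ₖ (Gmat α₁ n₁ + (-3:ℝ) • hankelMat (gSymb α₁) n₁))
          + cy • ((Gmat α₂ n₂ + (-3:ℝ) • hankelMat (gSymb α₂) n₂) ⊗ₖ (1 : Matrix (Fin n₁) (Fin n₁) ℝ))) := by
    rw [hM, hP]
    unfold Amat tau1A
    rw [htau1, htau2]
    ext ⟨r,i⟩ ⟨s,j⟩
    simp only [Matrix.sub_apply, Matrix.add_apply, Matrix.smul_apply, Matrix.one_apply,
      Matrix.diagonal_apply, Matrix.kroneckerMap_apply, smul_eq_mul]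
    ring
  -- positivity of quadratic forms
  have hqdiag : ∀ w : Fin n₂ × Fin n₁ → ℝ, 0 ≤ S18.qF (Matrix.diagonal d) w := by
    intro w
    rw [S18.qF_diagonal]
    exact Finset.sum_nonneg fun p _ => mul_nonneg (hd p) (sq_nonneg _)
  have keylow : ∀ w : Fin n₂ × Fin n₁ → ℝ, ∑ p, w p^2 ≤ S18.qF ((2:ℝ) • M - P) w := by
    intro w
    rw [h2MP, S18.qF_sub, S18.qF_add, S18.qF_one]
    have hS := S18.bigQ_nonpos h11 h12 h21 h22 hn₁ hn₂ cx cy hcx.le hcy.le 1 (Or.inl rfl) w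
    have hD := hqdiag w
    linarith
  have keyup : ∀ w : Fin n₂ × Fin n₁ → ℝ, ∑ p, w p^2 ≤ S18.qF ((3:ℝ) • P - (2:ℝ) • M) w := by
    intro w
    rw [h3PM, S18.qF_sub, S18.qF_add, S18.qF_one]
    have hS := S18.bigQ_nonpos h11 h12 h21 h22 hn₁ hn₂ cx cy hcx.le hcy.le (-3) (Or.inr rfl) w
    have hD := hqdiag w
    linarith
  have hcombo : ((2:ℝ) • M - P) + ((3:ℝ) • P - (2:ℝ) • M) = (2:ℝ) • P := by
    ext p q
    simp only [Matrix.add_apply, Matrix.sub_apply, Matrix.smul_apply, smul_eq_mul]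
    ring
  have keyP : ∀ w : Fin n₂ × Fin n₁ → ℝ, ∑ p, w p^2 ≤ S18.qF P w := by
    intro w
    have h1 := keylow w
    have h2 := keyup w
    have h3 : S18.qF ((2:ℝ) • M - P) w + S18.qF ((3:ℝ) • P - (2:ℝ) • M) w = 2 * S18.qF P w := by
      rw [← S18.qF_add, hcombo, S18.qF_smul]
    linarith
  -- invertibility of P
  have hPdet : IsUnit P.det := by
    rw [isUnit_iff_ne_zero]
    intro h0
    obtain ⟨v, hv0, hPv⟩ := Matrix.exists_mulVec_eq_zero_iff.2 h0
    have h1 := keyP v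
    rw [S18.qF_eq_dot, hPv, dotProduct_zero] at h1
    obtain ⟨p, hp⟩ := Function.ne_iff.1 hv0
    have : 0 < ∑ q, v q^2 :=
      Finset.sum_pos' (fun q _ => sq_nonneg _)
        ⟨p, Finset.mem_univ p, lt_of_le_of_ne (sq_nonneg _) (Ne.symm (pow_ne_zero 2 hp))⟩
    linarith
  -- symmetry
  have hGsym1 : ∀ i j : Fin n₁, Gmat α₁ n₁ i j = Gmat α₁ n₁ j i := fun i j => S18.Gmat_symm i j
  have hGsym2 : ∀ i j : Fin n₂, Gmat α₂ n₂ i j = Gmat α₂ n₂ j i := fun i j => S18.Gmat_symm i j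
  have h1sym : ∀ (m : ℕ) (p q : Fin m),
      (1 : Matrix (Fin m) (Fin m) ℝ) p q = (1 : Matrix (Fin m) (Fin m) ℝ) q p := by
    intro m p q
    rw [Matrix.one_apply, Matrix.one_apply]
    simp [eq_comm]
  have h1symK : ∀ p q : Fin n₂ × Fin n₁,
      (1 : Matrix (Fin n₂ × Fin n₁) (Fin n₂ × Fin n₁) ℝ) p q
        = (1 : Matrix (Fin n₂ × Fin n₁) (Fin n₂ × Fin n₁) ℝ) q p := by
    intro p q
    rw [Matrix.one_apply, Matrix.one_apply]
    simp [eq_comm]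
  have hdsym : ∀ p q : Fin n₂ × Fin n₁, Matrix.diagonal d p q = Matrix.diagonal d q p := by
    intro p q
    rcases eq_or_ne p q with rfl | h
    · rfl
    · rw [Matrix.diagonal_apply_ne _ h, Matrix.diagonal_apply_ne _ (Ne.symm h)]
  have hMsym : ∀ p q, M p q = M q p := by
    intro p q
    rw [hM]
    obtain ⟨r, i⟩ := p
    obtain ⟨s, j⟩ := q
    simp only [Matrix.sub_apply, Matrix.add_apply, Amat, Matrix.smul_apply,
      Matrix.kroneckerMap_apply, smul_eq_mul]
    rw [hGsym1 i j, hGsym2 r s, h1sym _ r s, h1sym _ i j, h1symK (r,i) (s,j), hdsym (r,i) (s,j)]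
  have hPsym : ∀ p q, P p q = P q p := by
    intro p q
    rw [hP]
    obtain ⟨r, i⟩ := p
    obtain ⟨s, j⟩ := q
    simp only [Matrix.sub_apply, Matrix.add_apply, tau1A, htau1, htau2, Matrix.smul_apply,
      Matrix.kroneckerMap_apply, smul_eq_mul]
    rw [hGsym1 i j, hGsym2 r s, h1sym _ r s, h1sym _ i j, h1symK (r,i) (s,j), hdsym (r,i) (s,j),
      S18.hankel_symm (gSymb α₁) i j, S18.hankel_symm (gSymb α₂) r s]
  -- transfer the eigen equation
  have hfr : (fun a : ℝ => (a:ℂ)) = ⇑Complex.ofRealHom := rfl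
  have hPM : P * (P⁻¹ * M) = M := by
    rw [← mul_assoc, Matrix.mul_nonsing_inv P hPdet, one_mul]
  have hMz : (M.map (fun a : ℝ => (a:ℂ))) *ᵥ z = μ • ((P.map (fun a : ℝ => (a:ℂ))) *ᵥ z) := by
    have h1 : (P.map (fun a : ℝ => (a:ℂ))) *ᵥ (((P⁻¹ * M).map (fun a : ℝ => (a:ℂ))) *ᵥ z)
        = (P.map (fun a : ℝ => (a:ℂ))) *ᵥ (μ • z) := by rw [heq]
    rw [Matrix.mulVec_mulVec] at h1
    rw [hfr, ← Matrix.map_mul, hPM, Matrix.mulVec_smul] at h1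
    rw [hfr]
    exact h1
  have heq2 : ∑ p, (starRingEnd ℂ) (z p) * ((M.map (fun a : ℝ => (a:ℂ))) *ᵥ z) p
      = μ * ∑ p, (starRingEnd ℂ) (z p) * ((P.map (fun a : ℝ => (a:ℂ))) *ᵥ z) p := by
    rw [hMz, Finset.mul_sum]
    refine Finset.sum_congr rfl fun p _ => ?_
    rw [Pi.smul_apply, smul_eq_mul]
    ring
  have ha := S18.herm M hMsym z
  have hb := S18.herm P hPsym z
  set u : Fin n₂ × Fin n₁ → ℝ := fun p => (z p).re with hu
  set v : Fin n₂ × Fin n₁ → ℝ := fun p => (z p).im with hv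
  have hab : ((S18.qF M u + S18.qF M v : ℝ) : ℂ) = μ * ((S18.qF P u + S18.qF P v : ℝ) : ℂ) := by
    rw [← ha, ← hb]
    exact heq2
  -- positivity of denominators
  obtain ⟨p0, hp0⟩ := Function.ne_iff.1 hz
  have hzsq : 0 < ∑ p, (u p^2 + v p^2) := by
    apply Finset.sum_pos' (fun q _ => by positivity)
    refine ⟨p0, Finset.mem_univ _, ?_⟩
    have hne : (z p0).re ≠ 0 ∨ (z p0).im ≠ 0 := by
      by_contra hc
      push_neg at hc
      exact hp0 (Complex.ext hc.1 hc.2)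
    have hup : u p0 = (z p0).re := rfl
    have hvp : v p0 = (z p0).im := rfl
    rcases hne with h | h
    · have : 0 < (z p0).re^2 := by positivity
      rw [hup, hvp]
      nlinarith [sq_nonneg (z p0).im]
    · have : 0 < (z p0).im^2 := by positivity
      rw [hup, hvp]
      nlinarith [sq_nonneg (z p0).re]
  have hsumsplit : ∑ p, (u p^2 + v p^2) = (∑ p, u p^2) + (∑ p, v p^2) :=
    Finset.sum_add_distrib
  have hbpos : 0 < S18.qF P u + S18.qF P v := by
    have h1 := keyP u
    have h2 := keyP v
    linarith [hzsq, hsumsplit.symm.le]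
  have key1 : 0 < 2 * (S18.qF M u + S18.qF M v) - (S18.qF P u + S18.qF P v) := by
    have e1 : S18.qF ((2:ℝ) • M - P) u = 2 * S18.qF M u - S18.qF P u := by
      rw [S18.qF_sub, S18.qF_smul]
    have e2 : S18.qF ((2:ℝ) • M - P) v = 2 * S18.qF M v - S18.qF P v := by
      rw [S18.qF_sub, S18.qF_smul]
    have h1 := keylow u
    have h2 := keylow v
    rw [e1] at h1
    rw [e2] at h2
    linarith [hzsq, hsumsplit.le]
  have key2 : 0 < 3 * (S18.qF P u + S18.qF P v) - 2 * (S18.qF M u + S18.qF M v) := by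
    have e1 : S18.qF ((3:ℝ) • P - (2:ℝ) • M) u = 3 * S18.qF P u - 2 * S18.qF M u := by
      rw [S18.qF_sub, S18.qF_smul, S18.qF_smul]
    have e2 : S18.qF ((3:ℝ) • P - (2:ℝ) • M) v = 3 * S18.qF P v - 2 * S18.qF M v := by
      rw [S18.qF_sub, S18.qF_smul, S18.qF_smul]
    have h1 := keyup u
    have h2 := keyup v
    rw [e1] at h1
    rw [e2] at h2
    linarith [hzsq, hsumsplit.le]
  have hbne : ((S18.qF P u + S18.qF P v : ℝ) : ℂ) ≠ 0 := by
    exact_mod_cast hbpos.ne'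
  have hμval : μ = (((S18.qF M u + S18.qF M v) / (S18.qF P u + S18.qF P v) : ℝ) : ℂ) := by
    rw [Complex.ofReal_div, eq_div_iff hbne]
    exact hab.symm
  refine ⟨?_, ?_, ?_⟩
  · rw [hμval]
    exact Complex.ofReal_im _
  · rw [hμval, Complex.ofReal_re, lt_div_iff₀ hbpos]
    linarith
  · rw [hμval, Complex.ofReal_re, div_lt_iff₀ hbpos]
    linarith
end
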